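/- arXiv:2107.01515 — 8 statements merged into one kernel-verified Lean document; each statement's English description precedes it below -/
import Mathlib

section
/- Let B be a complex Banach space and p a norm-one continuous linear functional on B. For λ, λ' in the unit circle 𝕋, define F_{p,λ} = {a ∈ S(B) : p(a) = λ}. If both F_{p,λ} and F_{p,λ'} are nonempty, then the Hausdorff distance between F_{p,λ} and F_{p,λ'} equals |λ − λ'|. -/
/-- For a norm-one functional `p` on a complex Banach space and
unimodular `λ, λ'`, if the faces `F_{p,λ}` and `F_{p,λ'}` are nonempty then
their Hausdorff distance is `|λ - λ'|`. -/
theorem stmt1 {B : Type*} [NormedAddCommGroup B] [NormedSpace ℂ B] [CompleteSpace B]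
    (p : StrongDual ℂ B) (hp : ‖p‖ = 1)
    (lam lam' : ℂ) (hlam : ‖lam‖ = 1) (hlam' : ‖lam'‖ = 1)
    (h₁ : ({a : B | ‖a‖ = 1 ∧ p a = lam}).Nonempty)
    (h₂ : ({a : B | ‖a‖ = 1 ∧ p a = lam'}).Nonempty) :
    Metric.hausdorffDist {a : B | ‖a‖ = 1 ∧ p a = lam} {a : B | ‖a‖ = 1 ∧ p a = lam'}
      = ‖lam - lam'‖ := by
  set F : Set B := {a : B | ‖a‖ = 1 ∧ p a = lam}
  set F' : Set B := {a : B | ‖a‖ = 1 ∧ p a = lam'}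
  have hlam0 : lam ≠ 0 := by intro h; simp [h] at hlam
  have hlam'0 : lam' ≠ 0 := by intro h; simp [h] at hlam'
  have hd0 : (0 : ℝ) ≤ ‖lam - lam'‖ := norm_nonneg _
  -- key rotation construction
  have rot : ∀ (μ ν : ℂ), ‖μ‖ = 1 → ‖ν‖ = 1 → μ ≠ 0 →
      ∀ a ∈ ({a : B | ‖a‖ = 1 ∧ p a = μ} : Set B),
      (ν * μ⁻¹) • a ∈ ({a : B | ‖a‖ = 1 ∧ p a = ν} : Set B) ∧
        dist a ((ν * μ⁻¹) • a) = ‖μ - ν‖ := by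
    intro μ ν hμ hν hμ0 a ha
    obtain ⟨hna, hpa⟩ := ha
    have hnorm : ‖(ν * μ⁻¹) • a‖ = 1 := by
      rw [norm_smul, hna, norm_mul, hν, norm_inv, hμ]; norm_num
    refine ⟨⟨hnorm, by simp [hpa, mul_assoc, inv_mul_cancel₀ hμ0]⟩, ?_⟩
    have : a - (ν * μ⁻¹) • a = (1 - ν * μ⁻¹) • a := by
      rw [sub_smul, one_smul]
    rw [dist_eq_norm, this, norm_smul, hna, mul_one]
    have : (1 : ℂ) - ν * μ⁻¹ = (μ - ν) * μ⁻¹ := by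
      field_simp
    rw [this, norm_mul, norm_inv, hμ]; norm_num
  -- lower bound on pairwise distances
  have hlow : ∀ a ∈ F, ∀ b ∈ F', ‖lam - lam'‖ ≤ dist a b := by
    intro a ha b hb
    have : lam - lam' = p (a - b) := by simp [ha.2, hb.2]
    calc ‖lam - lam'‖ = ‖p (a - b)‖ := by rw [this]
      _ ≤ ‖p‖ * ‖a - b‖ := p.le_opNorm _
      _ = dist a b := by rw [hp, one_mul, dist_eq_norm]
  have hub : Metric.hausdorffDist F F' ≤ ‖lam - lam'‖ := by
    apply Metric.hausdorffDist_le_of_mem_dist hd0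
    · intro x hx
      obtain ⟨hmem, hdist⟩ := rot lam lam' hlam hlam' hlam0 x hx
      exact ⟨_, hmem, le_of_eq hdist⟩
    · intro x hx
      obtain ⟨hmem, hdist⟩ := rot lam' lam hlam' hlam hlam'0 x hx
      refine ⟨_, hmem, le_of_eq ?_⟩
      rw [hdist, norm_sub_rev]
  have hne : EMetric.hausdorffEdist F F' ≠ ⊤ := by
    apply Metric.hausdorffEdist_ne_top_of_nonempty_of_bounded h₁ h₂
    · exact (Metric.isBounded_closedBall (x := (0:B)) (r := 1)).subset
        (fun x hx => by simp [Metric.mem_closedBall, dist_eq_norm, hx.1])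
    · exact (Metric.isBounded_closedBall (x := (0:B)) (r := 1)).subset
        (fun x hx => by simp [Metric.mem_closedBall, dist_eq_norm, hx.1])
  obtain ⟨a, ha⟩ := h₁
  have hlb : ‖lam - lam'‖ ≤ Metric.hausdorffDist F F' := by
    calc ‖lam - lam'‖ ≤ Metric.infDist a F' := by
          have he : ENNReal.ofReal ‖lam - lam'‖ ≤ EMetric.infEdist a F' :=
            EMetric.le_infEdist.2 (fun b hb => by
              rw [edist_dist]; exact ENNReal.ofReal_le_ofReal (hlow a ha b hb))
          have := ENNReal.toReal_mono (Metric.infEdist_ne_top h₂) he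
          rwa [ENNReal.toReal_ofReal hd0] at this
      _ ≤ Metric.hausdorffDist F F' := Metric.infDist_le_hausdorffDist_of_mem ha hne
  linarith
end

section
/- Let B be a complex Banach space, and let p, p' be norm-one continuous linear functionals on B. Suppose γ, γ' ∈ 𝕋 are such that F_{p,γ} ∩ F_{p',−γ'} is nonempty and F_{p',γ'} is nonempty. Then the Hausdorff distance between F_{p,γ} and F_{p',γ'} equals 2. -/
/-- If `F_{p,γ} ∩ F_{p',-γ'} ≠ ∅` and `F_{p',γ'} ≠ ∅`, then the
Hausdorff distance between `F_{p,γ}` and `F_{p',γ'}` equals `2`. -/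
theorem stmt2 {B : Type*} [NormedAddCommGroup B] [NormedSpace ℂ B] [CompleteSpace B]
    (p p' : StrongDual ℂ B) (hp : ‖p‖ = 1) (hp' : ‖p'‖ = 1)
    (γ γ' : ℂ) (hγ : ‖γ‖ = 1) (hγ' : ‖γ'‖ = 1)
    (h₁ : ({a : B | ‖a‖ = 1 ∧ p a = γ} ∩ {a : B | ‖a‖ = 1 ∧ p' a = -γ'}).Nonempty)
    (h₂ : ({a : B | ‖a‖ = 1 ∧ p' a = γ'}).Nonempty) :
    Metric.hausdorffDist {a : B | ‖a‖ = 1 ∧ p a = γ} {a : B | ‖a‖ = 1 ∧ p' a = γ'}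
      = 2 := by
  set s := {a : B | ‖a‖ = 1 ∧ p a = γ} with hsdef
  set t := {a : B | ‖a‖ = 1 ∧ p' a = γ'} with htdef
  obtain ⟨x, ⟨hx1, hxp⟩, hx1', hxp'⟩ := h₁
  obtain ⟨y0, hy01, hy0p⟩ := h₂
  have hxs : x ∈ s := ⟨hx1, hxp⟩
  have hy0t : y0 ∈ t := ⟨hy01, hy0p⟩
  have hs : s.Nonempty := ⟨x, hxs⟩
  have ht : t.Nonempty := ⟨y0, hy0t⟩
  have bs : Bornology.IsBounded s := by
    apply (Metric.isBounded_closedBall (x := (0:B)) (r := 1)).subset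
    intro a ha
    simp [Metric.mem_closedBall, dist_zero_right, ha.1]
  have bt : Bornology.IsBounded t := by
    apply (Metric.isBounded_closedBall (x := (0:B)) (r := 1)).subset
    intro a ha
    simp [Metric.mem_closedBall, dist_zero_right, ha.1]
  have hne : EMetric.hausdorffEdist s t ≠ ⊤ :=
    Metric.hausdorffEdist_ne_top_of_nonempty_of_bounded hs ht bs bt
  have hle : Metric.hausdorffDist s t ≤ 2 := by
    apply Metric.hausdorffDist_le_of_mem_dist (by norm_num)
    · intro a ha
      refine ⟨y0, hy0t, ?_⟩
      calc dist a y0 ≤ ‖a‖ + ‖y0‖ := by rw [dist_eq_norm]; exact norm_sub_le _ _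
      _ = 2 := by rw [ha.1, hy01]; norm_num
    · intro b hb
      refine ⟨x, hxs, ?_⟩
      calc dist b x ≤ ‖b‖ + ‖x‖ := by rw [dist_eq_norm]; exact norm_sub_le _ _
      _ = 2 := by rw [hb.1, hx1]; norm_num
  have hge : 2 ≤ Metric.hausdorffDist s t := by
    have h2 : 2 ≤ Metric.infDist x t := by
      rw [Metric.infDist_eq_iInf]
      haveI : Nonempty ↑t := ht.to_subtype
      apply le_ciInf
      rintro ⟨y, hy⟩
      show (2:ℝ) ≤ dist x y
      have key : ‖p' (x - y)‖ ≤ ‖p'‖ * ‖x - y‖ := p'.le_opNorm _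
      have : p' (x - y) = -(2 * γ') := by
        rw [map_sub, hxp', hy.2]; ring
      rw [this, hp', one_mul] at key
      have h2γ : ‖-(2 * γ')‖ = 2 := by
        rw [norm_neg, norm_mul, hγ']; simp
      rw [h2γ] at key
      rw [dist_eq_norm]
      exact key
    exact le_trans h2 (Metric.infDist_le_hausdorffDist_of_mem hxs hne)
  linarith
end

section
/- Let B be a real or complex Banach space, p a continuous linear functional of norm one on B, and α a scalar with |α| ≤ 1, α ≠ 0. Define M_{p,α} = {a ∈ S(B) : d(a, F_{p,α/|α|}) ≤ 1 − |α| and d(a, F_{p,−α/|α|}) ≤ 1 + |α|}, where F_{p,λ} = {a ∈ S(B) : p(a) = λ}. Then M_{p,α} ⊆ {a ∈ S(B) : p(a) = α}. -/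
/-- For a norm-one functional `p` and a scalar `α` with `0 < |α| ≤ 1`,
the set `M_{p,α}` (defined with distances to the faces `F_{p,±α/|α|}`, using the
extended distance so that the distance to the empty set is `∞`) is contained in
`{a ∈ S(B) : p a = α}`. -/
theorem stmt3 {𝕜 : Type*} [RCLike 𝕜] {B : Type*} [NormedAddCommGroup B]
    [NormedSpace 𝕜 B] [CompleteSpace B]
    (p : StrongDual 𝕜 B) (hp : ‖p‖ = 1)
    (α : 𝕜) (hα₁ : ‖α‖ ≤ 1) (hα₀ : α ≠ 0) :
    {a : B | ‖a‖ = 1 ∧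
        EMetric.infEdist a {b : B | ‖b‖ = 1 ∧ p b = α / (‖α‖ : 𝕜)} ≤
          ENNReal.ofReal (1 - ‖α‖) ∧
        EMetric.infEdist a {b : B | ‖b‖ = 1 ∧ p b = -(α / (‖α‖ : 𝕜))} ≤
          ENNReal.ofReal (1 + ‖α‖)} ⊆
      {a : B | ‖a‖ = 1 ∧ p a = α} := by
  intro a ha
  obtain ⟨ha1, h1, h2⟩ := ha
  refine ⟨ha1, ?_⟩
  set r : ℝ := ‖α‖ with hr
  have hr0 : 0 < r := norm_pos_iff.mpr hα₀
  set lam : 𝕜 := α / (r : 𝕜) with hlam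
  have hlamn : ‖lam‖ = 1 := by
    rw [hlam, norm_div, RCLike.norm_ofReal, abs_of_pos hr0, div_self hr0.ne']
  -- key: distance hypothesis gives functional estimate
  have key : ∀ (μ : 𝕜) (d : ℝ), 0 ≤ d →
      EMetric.infEdist a {b : B | ‖b‖ = 1 ∧ p b = μ} ≤ ENNReal.ofReal d →
      ‖p a - μ‖ ≤ d := by
    intro μ d hd hle
    refine le_of_forall_pos_le_add ?_
    intro ε hε
    have hlt : EMetric.infEdist a {b : B | ‖b‖ = 1 ∧ p b = μ} <
        ENNReal.ofReal (d + ε) :=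
      lt_of_le_of_lt hle (ENNReal.ofReal_lt_ofReal_iff (by linarith)|>.mpr (by linarith))
    obtain ⟨b, hb, hbd⟩ := EMetric.infEdist_lt_iff.mp hlt
    have hdist : dist a b < d + ε := by
      rwa [edist_dist, ENNReal.ofReal_lt_ofReal_iff (by positivity)] at hbd
    have : ‖p a - μ‖ ≤ ‖a - b‖ := by
      calc ‖p a - μ‖ = ‖p (a - b)‖ := by rw [map_sub, hb.2]
        _ ≤ ‖p‖ * ‖a - b‖ := p.le_opNorm _
        _ = ‖a - b‖ := by rw [hp, one_mul]
    calc ‖p a - μ‖ ≤ ‖a - b‖ := this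
      _ = dist a b := (dist_eq_norm a b).symm
      _ ≤ d + ε := hdist.le
  have h1' : ‖p a - lam‖ ≤ 1 - r := key lam (1 - r) (by linarith) h1
  have h2' : ‖p a + lam‖ ≤ 1 + r := by
    have := key (-lam) (1 + r) (by linarith) h2
    simpa [sub_neg_eq_add] using this
  -- set w = conj lam * p a
  set w : 𝕜 := (starRingEnd 𝕜) lam * p a with hw
  have hcl : (starRingEnd 𝕜) lam * lam = 1 := by
    rw [RCLike.conj_mul]
    rw [hlamn]
    norm_num
  have hw1 : ‖w - 1‖ ≤ 1 - r := by
    have : w - 1 = (starRingEnd 𝕜) lam * (p a - lam) := by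
      rw [mul_sub, hcl, hw]
    rw [this, norm_mul, RCLike.norm_conj, hlamn, one_mul]
    exact h1'
  have hw2 : ‖w + 1‖ ≤ 1 + r := by
    have : w + 1 = (starRingEnd 𝕜) lam * (p a + lam) := by
      rw [mul_add, hcl, hw]
    rw [this, norm_mul, RCLike.norm_conj, hlamn, one_mul]
    exact h2'
  have hre2 : RCLike.re w ≤ r := by
    have h := RCLike.re_le_norm (w + 1)
    rw [map_add, RCLike.one_re] at h
    linarith [le_trans h hw2]
  have hnorm1 : ‖w - 1‖ ^ 2 = (RCLike.re w - 1) ^ 2 + (RCLike.im w) ^ 2 := by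
    rw [RCLike.norm_sq_eq_def]
    simp [map_sub, RCLike.one_re, RCLike.one_im]
    ring
  have hsq : (RCLike.re w - 1) ^ 2 + (RCLike.im w) ^ 2 ≤ (1 - r) ^ 2 := by
    rw [← hnorm1]
    have := sq_le_sq' (by linarith [norm_nonneg (w - 1)] : -(1 - r) ≤ ‖w - 1‖) hw1
    exact this
  have him : RCLike.im w = 0 := by nlinarith
  have hrew : RCLike.re w = r := by nlinarith
  have hwr : w = (r : 𝕜) := by
    apply RCLike.ext
    · rw [hrew]; simp
    · rw [him]; simp
  have : p a = lam * w := by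
    rw [hw, ← mul_assoc, mul_comm lam, hcl, one_mul]
  rw [this, hwr, hlam, div_mul_cancel₀]
  exact_mod_cast hr0.ne'
end

section
/- Let B be a real or complex Banach space. For every maximal convex subset F of the unit sphere S(B), there exists an extreme point p of the closed unit ball of the dual space B* such that F = p⁻¹(1) ∩ S(B). -/
open RCLike Metric Set NormedSpace

/-- An element of the closed unit disc of `𝕜` with real part `1` equals `1`. -/
theorem aux_eq_one_of_re {𝕜 : Type*} [RCLike 𝕜] (z : 𝕜) (h1 : ‖z‖ ≤ 1) (h2 : re z = 1) :
    z = 1 := by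
  have him : im z = 0 := by nlinarith [norm_nonneg z, RCLike.norm_sq_eq_def (z := z)]
  exact RCLike.ext (by simp [h2]) (by simp [him])

/-- If a proper convex combination of two elements of the closed unit disc equals `1`,
then both elements equal `1`. -/
theorem aux_eq_one_of_convex {𝕜 : Type*} [RCLike 𝕜] (z₁ z₂ : 𝕜) (h1 : ‖z₁‖ ≤ 1) (h2 : ‖z₂‖ ≤ 1)
    {a b : ℝ} (ha : 0 < a) (hb : 0 < b) (hab : a + b = 1) (h : a • z₁ + b • z₂ = 1) :
    z₁ = 1 ∧ z₂ = 1 := by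
  have hre : a * re z₁ + b * re z₂ = 1 := by
    have := congrArg re h
    simpa [smul_re] using this
  have hr1 : re z₁ ≤ 1 := (RCLike.re_le_norm z₁).trans h1
  have hr2 : re z₂ ≤ 1 := (RCLike.re_le_norm z₂).trans h2
  have e1 : re z₁ = 1 := by nlinarith
  have e2 : re z₂ = 1 := by nlinarith
  exact ⟨aux_eq_one_of_re _ h1 e1, aux_eq_one_of_re _ h2 e2⟩

set_option maxHeartbeats 1000000 in
/-- Every maximal convex subset `F` of the unit sphere of a (real or
complex) Banach space is of the form `p⁻¹(1) ∩ S(B)` for some extreme point `p`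
of the closed unit ball of the dual space. -/
theorem stmt6 {𝕜 : Type*} [RCLike 𝕜] {B : Type*} [NormedAddCommGroup B]
    [NormedSpace 𝕜 B] [NormedSpace ℝ B] [IsScalarTower ℝ 𝕜 B] [CompleteSpace B]
    (F : Set B)
    (hF : Convex ℝ F ∧ F ⊆ {a : B | ‖a‖ = 1} ∧
      ∀ G : Set B, Convex ℝ G → G ⊆ {a : B | ‖a‖ = 1} → F ⊆ G → G = F) :
    ∃ p ∈ Set.extremePoints ℝ (Metric.closedBall (0 : StrongDual 𝕜 B) 1),
      F = {a : B | p a = 1} ∩ {a : B | ‖a‖ = 1} := by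
  obtain ⟨hFc, hFs, hFmax⟩ := hF
  by_cases hsph : ∃ x : B, ‖x‖ = 1
  swap
  · -- degenerate case: the sphere is empty, so `B` is trivial
    have hsub : Subsingleton B := by
      constructor
      intro x y
      by_contra hxy
      have hx : x - y ≠ 0 := sub_ne_zero.2 hxy
      exact hsph ⟨‖x - y‖⁻¹ • (x - y), by
        rw [norm_smul, norm_inv, norm_norm, inv_mul_cancel₀ (norm_ne_zero_iff.2 hx)]⟩
    have hdsub : Subsingleton (StrongDual 𝕜 B) := by
      constructor
      intro f g
      ext x
      rw [Subsingleton.elim x 0]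
      simp
    refine ⟨0, ⟨by simp, ?_⟩, ?_⟩
    · intro x1 _ x2 _ _
      exact Subsingleton.elim _ _
    · have hFe : F = ∅ := by
        rw [Set.eq_empty_iff_forall_notMem]
        exact fun a ha => hsph ⟨a, hFs ha⟩
      rw [hFe]
      ext a
      simp only [Set.mem_empty_iff_false, Set.mem_inter_iff, Set.mem_setOf_eq, false_iff]
      rintro ⟨-, h2⟩
      exact hsph ⟨a, h2⟩
  · -- main case
    have hne : F.Nonempty := by
      obtain ⟨x, hx⟩ := hsph
      by_contra hFe
      rw [Set.not_nonempty_iff_eq_empty] at hFe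
      have := hFmax {x} (convex_singleton x) (by simp [hx]) (by simp [hFe])
      simp [hFe] at this
    -- separate the open unit ball from `F`
    obtain ⟨f, s, hfU, hfF⟩ := _root_.geometric_hahn_banach_open (convex_ball (0:B) 1) isOpen_ball hFc
      (by
        rw [Set.disjoint_left]
        intro a ha haF
        have := hFs haF
        simp only [mem_ball, dist_zero_right] at ha
        simp only [Set.mem_setOf_eq] at this
        linarith)
    have hs0 : 0 < s := by
      have := hfU 0 (by simp)
      simpa using this
    have hunit : ∀ y : B, ‖y‖ = 1 → f y ≤ s := by
      intro y hy1
      by_contra hlt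
      push_neg at hlt
      have hfy0 : 0 < f y := hs0.trans hlt
      set c : ℝ := (s / f y + 1) / 2 with hc
      have hdiv1 : s / f y < 1 := (div_lt_one hfy0).2 hlt
      have hdiv0 : 0 < s / f y := div_pos hs0 hfy0
      have hc0 : 0 < c := by rw [hc]; linarith
      have hc1 : c < 1 := by rw [hc]; linarith
      have hgt : s / f y < c := by rw [hc]; linarith
      have hmem : c • y ∈ ball (0 : B) 1 := by
        simp only [mem_ball, dist_zero_right, norm_smul, hy1, mul_one, Real.norm_eq_abs,
          abs_of_pos hc0]
        exact hc1
      have h2 := hfU (c • y) hmem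
      rw [map_smul, smul_eq_mul] at h2
      have : s < c * f y := (div_lt_iff₀ hfy0).1 hgt
      linarith
    have hfnorm : ‖f‖ ≤ s := by
      refine ContinuousLinearMap.opNorm_le_of_unit_norm hs0.le fun x hx => ?_
      rw [Real.norm_eq_abs, abs_le]
      constructor
      · have := hunit (-x) (by simpa using hx)
        simp only [map_neg] at this
        linarith
      · exact hunit x hx
    have hfb : ∀ b ∈ F, f b = s := by
      intro b hb
      have h1 : s ≤ f b := hfF b hb
      have h2 : f b ≤ s := by
        calc f b ≤ ‖f b‖ := le_abs_self _
          _ ≤ ‖f‖ * ‖b‖ := f.le_opNorm b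
          _ = ‖f‖ := by rw [hFs hb, mul_one]
          _ ≤ s := hfnorm
      linarith
    set g : B →L[ℝ] ℝ := s⁻¹ • f with hg
    have hgapp : ∀ x : B, g x = s⁻¹ * f x := fun x => rfl
    have hgnorm : ‖g‖ ≤ 1 := by
      refine ContinuousLinearMap.opNorm_le_bound _ zero_le_one fun x => ?_
      rw [hgapp, Real.norm_eq_abs, abs_mul, abs_of_pos (inv_pos.2 hs0), one_mul]
      calc s⁻¹ * |f x| ≤ s⁻¹ * (s * ‖x‖) := by
            refine mul_le_mul_of_nonneg_left ?_ (inv_nonneg.2 hs0.le)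
            have := f.le_opNorm x
            rw [Real.norm_eq_abs] at this
            nlinarith [norm_nonneg x]
        _ = ‖x‖ := by field_simp
    have hgb : ∀ b ∈ F, g b = 1 := by
      intro b hb
      rw [hgapp, hfb b hb, inv_mul_cancel₀ hs0.ne']
    -- complexify
    set p₀ : B →L[𝕜] 𝕜 := g.extendTo𝕜' with hp₀
    have hp₀norm : ‖p₀‖ ≤ 1 := by rw [hp₀]; exact (StrongDual.norm_extendRCLike g).trans_le hgnorm
    have hp₀b : ∀ b ∈ F, p₀ b = 1 := by
      intro b hb
      refine aux_eq_one_of_re _ ?_ ?_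
      · calc ‖p₀ b‖ ≤ ‖p₀‖ * ‖b‖ := p₀.le_opNorm b
          _ ≤ 1 * 1 := mul_le_mul hp₀norm (le_of_eq (hFs hb)) (norm_nonneg _) zero_le_one
          _ = 1 := one_mul 1
      · have : re (p₀ b) = g b := g.toLinearMap.extendTo𝕜'_apply_re b
        rw [this, hgb b hb]
    -- the face of the dual ball
    set Φ : Set (WeakDual 𝕜 B) :=
      (WeakDual.toStrongDual ⁻¹' closedBall 0 1) ∩ {q | ∀ b ∈ F, q b = 1} with hΦ
    have hΦnorm : ∀ q ∈ Φ, ‖WeakDual.toStrongDual q‖ ≤ 1 := by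
      intro q hq
      have := hq.1
      simpa [mem_closedBall, dist_zero_right] using this
    have hΦcompact : IsCompact Φ := by
      apply (WeakDual.isCompact_closedBall (0 : StrongDual 𝕜 B) 1).inter_right
      have : {q : WeakDual 𝕜 B | ∀ b ∈ F, q b = 1} = ⋂ b ∈ F, {q : WeakDual 𝕜 B | q b = 1} := by
        ext q; simp
      rw [this]
      refine isClosed_biInter fun b _ => ?_
      exact isClosed_eq (WeakDual.eval_continuous b) continuous_const
    have hΦne : Φ.Nonempty := by
      refine ⟨StrongDual.toWeakDual p₀, ?_, ?_⟩
      · simpa [mem_closedBall, dist_zero_right] using hp₀norm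
      · exact hp₀b
    haveI : LocallyConvexSpace ℝ (WeakDual 𝕜 B) := WeakBilin.locallyConvexSpace
    obtain ⟨q, hq⟩ := hΦcompact.extremePoints_nonempty hΦne
    -- Φ is an extreme subset of the dual ball
    have hext : IsExtreme ℝ (WeakDual.toStrongDual ⁻¹' closedBall (0 : StrongDual 𝕜 B) 1) Φ := by
      constructor
      · exact Set.inter_subset_left
      · rintro x1 hx1 x2 hx2 x ⟨hxB, hxF⟩ ⟨a, b, ha, hb, hab, hx⟩
        have hx1n : ‖WeakDual.toStrongDual x1‖ ≤ 1 := by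
          simpa [mem_closedBall, dist_zero_right] using hx1
        have hx2n : ‖WeakDual.toStrongDual x2‖ ≤ 1 := by
          simpa [mem_closedBall, dist_zero_right] using hx2
        have key : ∀ c ∈ F, x1 c = 1 ∧ x2 c = 1 := by
          intro c hc
          have hxc : a • x1 c + b • x2 c = 1 := by
            have h' : (a • x1 + b • x2) c = x c := by rw [hx]
            rw [hxF c hc] at h'
            exact h'
          refine aux_eq_one_of_convex _ _ ?_ ?_ ha hb hab hxc
          · calc ‖x1 c‖ ≤ ‖WeakDual.toStrongDual x1‖ * ‖c‖ :=
                (WeakDual.toStrongDual x1).le_opNorm c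
              _ ≤ 1 * 1 := mul_le_mul hx1n (le_of_eq (hFs hc)) (norm_nonneg _) zero_le_one
              _ = 1 := one_mul 1
          · calc ‖x2 c‖ ≤ ‖WeakDual.toStrongDual x2‖ * ‖c‖ :=
                (WeakDual.toStrongDual x2).le_opNorm c
              _ ≤ 1 * 1 := mul_le_mul hx2n (le_of_eq (hFs hc)) (norm_nonneg _) zero_le_one
              _ = 1 := one_mul 1
        exact ⟨hx1, fun c hc => (key c hc).1⟩
    have hqball : q ∈ Set.extremePoints ℝ
        (WeakDual.toStrongDual ⁻¹' closedBall (0 : StrongDual 𝕜 B) 1) :=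
      hext.extremePoints_subset_extremePoints hq
    have hqΦ : q ∈ Φ := hq.1
    have hqnorm : ‖WeakDual.toStrongDual q‖ ≤ 1 := hΦnorm q hqΦ
    have hqF : ∀ b ∈ F, q b = 1 := hqΦ.2
    refine ⟨WeakDual.toStrongDual q, ⟨?_, ?_⟩, ?_⟩
    · simpa [mem_closedBall, dist_zero_right] using hqnorm
    · intro x1 hx1 x2 hx2 hseg
      obtain ⟨a, b, ha, hb, hab, hsum⟩ := hseg
      have key : ∀ x : StrongDual 𝕜 B, WeakDual.toStrongDual (StrongDual.toWeakDual x) = x :=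
        fun x => rfl
      have hx1' : StrongDual.toWeakDual x1 ∈
          (WeakDual.toStrongDual ⁻¹' closedBall (0 : StrongDual 𝕜 B) 1) := by
        rw [Set.mem_preimage, key]
        exact hx1
      have hx2' : StrongDual.toWeakDual x2 ∈
          (WeakDual.toStrongDual ⁻¹' closedBall (0 : StrongDual 𝕜 B) 1) := by
        rw [Set.mem_preimage, key]
        exact hx2
      have hseg' : q ∈ openSegment ℝ (StrongDual.toWeakDual x1)
          (StrongDual.toWeakDual x2) := by
        refine ⟨a, b, ha, hb, hab, ?_⟩
        exact hsum
      have hres := hqball.2 hx1' hx2' hseg'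
      have := congrArg WeakDual.toStrongDual hres
      rwa [key] at this
    · set p : StrongDual 𝕜 B := WeakDual.toStrongDual q with hp
      set G : Set B := {a : B | p a = 1} ∩ {a : B | ‖a‖ ≤ 1} with hG
      have hGs : G ⊆ {a : B | ‖a‖ = 1} := by
        rintro a ⟨h1, h2⟩
        have hge : (1:ℝ) ≤ ‖a‖ := by
          have h3 := p.le_opNorm a
          rw [h1, norm_one] at h3
          nlinarith [norm_nonneg a, mul_le_mul_of_nonneg_right hqnorm (norm_nonneg a)]
        exact le_antisymm h2 hge
      have hGc : Convex ℝ G := by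
        rintro a1 ⟨h1, h1n⟩ a2 ⟨h2, h2n⟩ t1 t2 ht1 ht2 hsum
        constructor
        · show p (t1 • a1 + t2 • a2) = 1
          rw [map_add, p.map_smul_of_tower, p.map_smul_of_tower, h1, h2]
          rw [RCLike.real_smul_eq_coe_mul, RCLike.real_smul_eq_coe_mul, mul_one, mul_one]
          rw [← RCLike.ofReal_add, hsum, RCLike.ofReal_one]
        · show ‖t1 • a1 + t2 • a2‖ ≤ 1
          calc ‖t1 • a1 + t2 • a2‖ ≤ ‖t1 • a1‖ + ‖t2 • a2‖ := norm_add_le _ _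
            _ = |t1| * ‖a1‖ + |t2| * ‖a2‖ := by rw [norm_smul, norm_smul]; rfl
            _ ≤ t1 * 1 + t2 * 1 := by
                rw [abs_of_nonneg ht1, abs_of_nonneg ht2]
                gcongr <;> [exact h1n; exact h2n]
            _ = 1 := by linarith
      have hFG : F ⊆ G := fun b hb => ⟨hqF b hb, le_of_eq (hFs hb)⟩
      have hGF : G = F := hFmax G hGc hGs hFG
      have hGeq : {a : B | p a = 1} ∩ {a : B | ‖a‖ = 1} = G := by
        apply Set.Subset.antisymm
        · rintro a ⟨h1, h2⟩
          exact ⟨h1, le_of_eq h2⟩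
        · intro a ha
          exact ⟨ha.1, hGs ha⟩
      rw [hGeq, hGF]
end

section
/- Let B₁, B₂ be complex Banach spaces, each satisfying the condition of the Hausdorff distance, and let T : S(B₁) → S(B₂) be a surjective isometry. Let P₁, P₂ be sets of representatives for the maximal convex subsets of S(B₁), S(B₂) respectively, and let φ : P₁ × 𝕋 → P₂ and τ : P₁ × 𝕋 → 𝕋 be the maps determined by T(F_{p,λ}) = F_{φ(p,λ), τ(p,λ)}. Then φ(p, λ) = φ(p, λ') for all p ∈ P₁ and λ, λ' ∈ 𝕋. -/
/-- A maximal convex subset of the unit sphere of `B`. -/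
def IsMaximalConvexSubset {B : Type*} [NormedAddCommGroup B] [Module ℝ B] (F : Set B) : Prop :=
  Convex ℝ F ∧ F ⊆ {a : B | ‖a‖ = 1} ∧
    ∀ G : Set B, Convex ℝ G → G ⊆ {a : B | ‖a‖ = 1} → F ⊆ G → G = F

/-- The face `F_{p,λ} = {a ∈ S(B) : p(a) = λ}`. -/
def faceSet {B : Type*} [NormedAddCommGroup B] [NormedSpace ℂ B]
    (p : StrongDual ℂ B) (lam : ℂ) : Set B :=
  {a : B | ‖a‖ = 1 ∧ p a = lam}

/-- `P` is a set of representatives for the maximal convex subsets of the sphere of `B`: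
every maximal convex subset is `F_{p,λ}` for a unique `(p,λ) ∈ P × 𝕋`, and every such
`F_{p,λ}` is maximal convex. -/
def IsRepresentativeSet {B : Type*} [NormedAddCommGroup B] [NormedSpace ℂ B]
    (P : Set (StrongDual ℂ B)) : Prop :=
  (∀ F : Set B, IsMaximalConvexSubset F → ∃ p ∈ P, ∃ lam : ℂ, ‖lam‖ = 1 ∧ F = faceSet p lam) ∧
  (∀ p ∈ P, ∀ lam : ℂ, ‖lam‖ = 1 → IsMaximalConvexSubset (faceSet p lam)) ∧
  (∀ p ∈ P, ∀ p' ∈ P, ∀ lam lam' : ℂ, ‖lam‖ = 1 → ‖lam'‖ = 1 →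
    faceSet p lam = faceSet p' lam' → p = p' ∧ lam = lam')

/-- `B` (with representatives `P`) satisfies the condition of the Hausdorff distance. -/
def HausdorffCondition {B : Type*} [NormedAddCommGroup B] [NormedSpace ℂ B]
    (P : Set (StrongDual ℂ B)) : Prop :=
  (∀ p ∈ P, ∀ lam lam' : ℂ, ‖lam‖ = 1 → ‖lam'‖ = 1 →
    Metric.hausdorffDist (faceSet p lam) (faceSet p lam') = ‖lam - lam'‖) ∧
  (∀ p ∈ P, ∀ p' ∈ P, p ≠ p' → ∀ lam lam' : ℂ, ‖lam‖ = 1 → ‖lam'‖ = 1 →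
    Metric.hausdorffDist (faceSet p lam) (faceSet p' lam') = 2)

lemma hausdorffEdist_image_of_edist_eq {α β : Type*} [PseudoEMetricSpace α] [PseudoEMetricSpace β]
    (f : α → β) (s t : Set α)
    (h : ∀ x ∈ s ∪ t, ∀ y ∈ s ∪ t, edist (f x) (f y) = edist x y) :
    Metric.hausdorffEDist (f '' s) (f '' t) = Metric.hausdorffEDist s t := by
  have key : ∀ (u v : Set α), u ⊆ s ∪ t → v ⊆ s ∪ t →
      (⨆ x ∈ f '' u, Metric.infEDist x (f '' v)) = ⨆ x ∈ u, Metric.infEDist x v := by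
    intro u v hu hv
    rw [iSup_image]
    refine iSup_congr fun x => ?_
    refine iSup_congr_Prop Iff.rfl fun hx => ?_
    simp only [Metric.infEDist, iInf_image]
    refine iInf_congr fun y => ?_
    refine iInf_congr_Prop Iff.rfl fun hy => ?_
    exact h x (hu hx) y (hv hy)
  rw [Metric.hausdorffEDist_def, Metric.hausdorffEDist_def,
    key s t Set.subset_union_left Set.subset_union_right,
    key t s Set.subset_union_right Set.subset_union_left]

/-- If `B₁, B₂` satisfy the condition of the Hausdorff distance and
`T` is a surjective isometry between their unit spheres inducing `φ, τ` via
`T(F_{p,λ}) = F_{φ(p,λ), τ(p,λ)}`, then `φ(p,λ)` does not depend on `λ`. -/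
theorem stmt8 {B₁ B₂ : Type*} [NormedAddCommGroup B₁] [NormedSpace ℂ B₁] [CompleteSpace B₁]
    [NormedAddCommGroup B₂] [NormedSpace ℂ B₂] [CompleteSpace B₂]
    (P₁ : Set (StrongDual ℂ B₁)) (P₂ : Set (StrongDual ℂ B₂))
    (hP₁ : IsRepresentativeSet P₁) (hP₂ : IsRepresentativeSet P₂)
    (hH₁ : HausdorffCondition P₁) (hH₂ : HausdorffCondition P₂)
    (T : B₁ → B₂)
    (hmap : ∀ a : B₁, ‖a‖ = 1 → ‖T a‖ = 1)
    (hsurj : ∀ b : B₂, ‖b‖ = 1 → ∃ a : B₁, ‖a‖ = 1 ∧ T a = b)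
    (hiso : ∀ a b : B₁, ‖a‖ = 1 → ‖b‖ = 1 → ‖T a - T b‖ = ‖a - b‖)
    (φ : StrongDual ℂ B₁ → ℂ → StrongDual ℂ B₂)
    (τ : StrongDual ℂ B₁ → ℂ → ℂ)
    (hφτ : ∀ p ∈ P₁, ∀ lam : ℂ, ‖lam‖ = 1 →
      φ p lam ∈ P₂ ∧ ‖τ p lam‖ = 1 ∧ T '' faceSet p lam = faceSet (φ p lam) (τ p lam)) :
    ∀ p ∈ P₁, ∀ lam lam' : ℂ, ‖lam‖ = 1 → ‖lam'‖ = 1 → φ p lam = φ p lam' := by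
  -- First: the claim when ‖lam - lam'‖ ≠ 2.
  have claim : ∀ p ∈ P₁, ∀ lam lam' : ℂ, ‖lam‖ = 1 → ‖lam'‖ = 1 →
      ‖lam - lam'‖ ≠ 2 → φ p lam = φ p lam' := by
    intro p hp lam lam' hl hl' hne
    by_contra hphi
    obtain ⟨hφ, hτ, himg⟩ := hφτ p hp lam hl
    obtain ⟨hφ', hτ', himg'⟩ := hφτ p hp lam' hl'
    -- Hausdorff distance of images equals original
    have hsub : faceSet p lam ∪ faceSet p lam' ⊆ {a : B₁ | ‖a‖ = 1} := by
      rintro a (⟨ha, -⟩ | ⟨ha, -⟩) <;> exact ha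
    have hE : Metric.hausdorffEDist (T '' faceSet p lam) (T '' faceSet p lam')
        = Metric.hausdorffEDist (faceSet p lam) (faceSet p lam') := by
      apply hausdorffEdist_image_of_edist_eq
      intro x hx y hy
      have hx1 : ‖x‖ = 1 := hsub hx
      have hy1 : ‖y‖ = 1 := hsub hy
      rw [edist_dist, edist_dist, dist_eq_norm, dist_eq_norm, hiso x y hx1 hy1]
    have hD : Metric.hausdorffDist (T '' faceSet p lam) (T '' faceSet p lam')
        = Metric.hausdorffDist (faceSet p lam) (faceSet p lam') := by
      unfold Metric.hausdorffDist
      rw [hE]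
    rw [himg, himg'] at hD
    rw [hH₂.2 (φ p lam) hφ (φ p lam') hφ' hphi (τ p lam) (τ p lam') hτ hτ'] at hD
    rw [hH₁.1 p hp lam lam' hl hl'] at hD
    exact hne hD.symm
  intro p hp lam lam' hl hl'
  by_cases h2 : ‖lam - lam'‖ = 2
  · -- Here lam' = -lam; go through the intermediate point μ = I * lam.
    have hμ : ‖Complex.I * lam‖ = 1 := by simp [hl]
    have h1lam : Complex.normSq lam = 1 := by
      rw [← Complex.sq_norm, hl]; norm_num
    have h1lam' : Complex.normSq lam' = 1 := by
      rw [← Complex.sq_norm, hl']; norm_num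
    have h4 : Complex.normSq (lam - lam') = 4 := by
      rw [← Complex.sq_norm, h2]; norm_num
    have hpar : Complex.normSq (lam + lam') = 0 := by
      simp only [Complex.normSq_apply, Complex.add_re, Complex.add_im, Complex.sub_re,
        Complex.sub_im] at h1lam h1lam' h4 ⊢
      nlinarith
    have hlam' : lam' = -lam := by
      have h0 : lam + lam' = 0 := Complex.normSq_eq_zero.mp hpar
      linear_combination h0
    have sqne : ∀ x : ℂ, ‖x‖ ^ 2 = 2 → ‖x‖ ≠ 2 := by
      intro x hx hc; rw [hc] at hx; norm_num at hx
    have h1 : ‖lam - Complex.I * lam‖ ≠ 2 := by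
      apply sqne
      have he : lam - Complex.I * lam = (1 - Complex.I) * lam := by ring
      rw [he, norm_mul, hl, mul_one, Complex.sq_norm]
      norm_num [Complex.normSq_apply]
    have h2' : ‖Complex.I * lam - lam'‖ ≠ 2 := by
      apply sqne
      have he : Complex.I * lam - lam' = (Complex.I + 1) * lam := by
        rw [hlam']; ring
      rw [he, norm_mul, hl, mul_one, Complex.sq_norm]
      norm_num [Complex.normSq_apply]
    exact (claim p hp lam (Complex.I * lam) hl hμ h1).trans
      (claim p hp (Complex.I * lam) lam' hμ hl' h2')
  · exact claim p hp lam lam' hl hl' h2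
end

section
/- With the hypotheses of the previous setting (B₁, B₂ complex Banach spaces satisfying the condition of the Hausdorff distance, T a surjective isometry of their unit spheres inducing maps φ and τ), for each p ∈ P₁ either τ(p, λ) = λ·τ(p,1) for all λ ∈ 𝕋, or τ(p, λ) = conj(λ)·τ(p,1) for all λ ∈ 𝕋. -/

private lemma unit_normsq (z : ℂ) (hz : ‖z‖ = 1) : z.re ^ 2 + z.im ^ 2 = 1 := by
  have h2 := Complex.sq_norm z
  rw [hz] at h2
  have := Complex.normSq_apply z
  nlinarith [h2, this]

private lemma normsq_sub (z w : ℂ) : ‖z - w‖ ^ 2 = (z.re - w.re) ^ 2 + (z.im - w.im) ^ 2 := by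
  rw [Complex.sq_norm, Complex.normSq_apply]
  simp [Complex.sub_re, Complex.sub_im]
  ring

private lemma dot_eq {z w z' w' : ℂ} (hz : ‖z‖ = 1) (hw : ‖w‖ = 1) (hz' : ‖z'‖ = 1)
    (hw' : ‖w'‖ = 1) (h : ‖z - w‖ = ‖z' - w'‖) :
    z.re * w.re + z.im * w.im = z'.re * w'.re + z'.im * w'.im := by
  have h2 : ‖z - w‖ ^ 2 = ‖z' - w'‖ ^ 2 := by rw [h]
  rw [normsq_sub, normsq_sub] at h2
  nlinarith [unit_normsq z hz, unit_normsq w hw, unit_normsq z' hz', unit_normsq w' hw']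

private lemma hd_image {B₁ B₂ : Type*} [NormedAddCommGroup B₁] [NormedAddCommGroup B₂]
    (T : B₁ → B₂) (hmap : ∀ a, ‖a‖ = 1 → ‖T a‖ = 1)
    (hiso : ∀ a b, ‖a‖ = 1 → ‖b‖ = 1 → ‖T a - T b‖ = ‖a - b‖)
    (s t : Set B₁) (hs : s ⊆ {a | ‖a‖ = 1}) (ht : t ⊆ {a | ‖a‖ = 1}) :
    Metric.hausdorffDist (T '' s) (T '' t) = Metric.hausdorffDist s t := by
  set S₁ : Set B₁ := {a | ‖a‖ = 1}
  set S₂ : Set B₂ := {b | ‖b‖ = 1}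
  let f : S₁ → S₂ := fun a => ⟨T a, hmap a a.2⟩
  have hf : Isometry f := Isometry.of_dist_eq fun a b => by
    simp only [Subtype.dist_eq, dist_eq_norm]
    exact hiso a b a.2 b.2
  have hcoe1 : Isometry ((↑) : S₁ → B₁) := isometry_subtype_coe
  have hcoe2 : Isometry ((↑) : S₂ → B₂) := isometry_subtype_coe
  set s' : Set S₁ := ((↑) : S₁ → B₁) ⁻¹' s with hs'def
  set t' : Set S₁ := ((↑) : S₁ → B₁) ⁻¹' t with ht'def
  have hs'' : ((↑) : S₁ → B₁) '' s' = s :=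
    Set.image_preimage_eq_of_subset (by rw [Subtype.range_coe]; exact hs)
  have ht'' : ((↑) : S₁ → B₁) '' t' = t :=
    Set.image_preimage_eq_of_subset (by rw [Subtype.range_coe]; exact ht)
  have himg : ∀ v : Set S₁, T '' (((↑) : S₁ → B₁) '' v) = ((↑) : S₂ → B₂) '' (f '' v) := by
    intro v
    rw [Set.image_image, Set.image_image]
  calc Metric.hausdorffDist (T '' s) (T '' t)
      = Metric.hausdorffDist (((↑) : S₂ → B₂) '' (f '' s')) (((↑) : S₂ → B₂) '' (f '' t')) := by
        rw [← hs'', ← ht'', himg, himg]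
    _ = Metric.hausdorffDist (f '' s') (f '' t') := Metric.hausdorffDist_image hcoe2
    _ = Metric.hausdorffDist s' t' := Metric.hausdorffDist_image hf
    _ = Metric.hausdorffDist s t := by
        rw [← hs'', ← ht'']
        exact (Metric.hausdorffDist_image hcoe1).symm

/-- Under the same setting (with `φ(p)` independent of `λ`), for each
`p ∈ P₁` either `τ(p,λ) = λ·τ(p,1)` for all unimodular `λ`, or
`τ(p,λ) = conj(λ)·τ(p,1)` for all unimodular `λ`. -/
theorem stmt9 {B₁ B₂ : Type*} [NormedAddCommGroup B₁] [NormedSpace ℂ B₁] [CompleteSpace B₁]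
    [NormedAddCommGroup B₂] [NormedSpace ℂ B₂] [CompleteSpace B₂]
    (P₁ : Set (StrongDual ℂ B₁)) (P₂ : Set (StrongDual ℂ B₂))
    (hP₁ : IsRepresentativeSet P₁) (hP₂ : IsRepresentativeSet P₂)
    (hH₁ : HausdorffCondition P₁) (hH₂ : HausdorffCondition P₂)
    (T : B₁ → B₂)
    (hmap : ∀ a : B₁, ‖a‖ = 1 → ‖T a‖ = 1)
    (hsurj : ∀ b : B₂, ‖b‖ = 1 → ∃ a : B₁, ‖a‖ = 1 ∧ T a = b)
    (hiso : ∀ a b : B₁, ‖a‖ = 1 → ‖b‖ = 1 → ‖T a - T b‖ = ‖a - b‖)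
    (φ : StrongDual ℂ B₁ → StrongDual ℂ B₂)
    (τ : StrongDual ℂ B₁ → ℂ → ℂ)
    (hφτ : ∀ p ∈ P₁, ∀ lam : ℂ, ‖lam‖ = 1 →
      φ p ∈ P₂ ∧ ‖τ p lam‖ = 1 ∧ T '' faceSet p lam = faceSet (φ p) (τ p lam)) :
    ∀ p ∈ P₁,
      (∀ lam : ℂ, ‖lam‖ = 1 → τ p lam = lam * τ p 1) ∨
      (∀ lam : ℂ, ‖lam‖ = 1 → τ p lam = (starRingEnd ℂ) lam * τ p 1) := by
  intro p hp
  have h1 : ‖(1 : ℂ)‖ = 1 := norm_one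
  obtain ⟨hφ1, hu, -⟩ := hφτ p hp 1 h1
  set u := τ p 1 with hudef
  -- τ(p,·) is an isometry on the circle
  have key : ∀ lam lam' : ℂ, ‖lam‖ = 1 → ‖lam'‖ = 1 →
      ‖τ p lam - τ p lam'‖ = ‖lam - lam'‖ := by
    intro lam lam' hl hl'
    obtain ⟨hφ₁, hτ₁, hT₁⟩ := hφτ p hp lam hl
    obtain ⟨-, hτ₂, hT₂⟩ := hφτ p hp lam' hl'
    have hface : ∀ μ : ℂ, faceSet p μ ⊆ {a : B₁ | ‖a‖ = 1} := fun μ a ha => ha.1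
    have hdi := hd_image T hmap hiso (faceSet p lam) (faceSet p lam') (hface lam) (hface lam')
    rw [hT₁, hT₂] at hdi
    rw [← hH₂.1 (φ p) hφ₁ _ _ hτ₁ hτ₂, hdi, hH₁.1 p hp lam lam' hl hl']
  have hnormsq : Complex.normSq u = 1 := by
    rw [← Complex.sq_norm, hu]; norm_num
  have hconju : (starRingEnd ℂ) u * u = 1 := by
    rw [mul_comm, Complex.mul_conj, hnormsq]; norm_num
  -- each τ(p,λ) is λu or conj(λ)u
  have step : ∀ lam : ℂ, ‖lam‖ = 1 →
      τ p lam = lam * u ∨ τ p lam = (starRingEnd ℂ) lam * u := by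
    intro lam hl
    have hτ : ‖τ p lam‖ = 1 := (hφτ p hp lam hl).2.1
    set σ : ℂ := τ p lam * (starRingEnd ℂ) u with hσdef
    have hσn : ‖σ‖ = 1 := by
      rw [hσdef, norm_mul, RCLike.norm_conj, hτ, hu, mul_one]
    have hd := dot_eq hτ hu hl h1 (key lam 1 hl h1)
    have hre : σ.re = lam.re := by
      rw [hσdef]
      simp only [Complex.mul_re, Complex.conj_re, Complex.conj_im, Complex.one_re,
        Complex.one_im] at hd ⊢
      linarith [hd]
    have him2 : (σ.im - lam.im) * (σ.im + lam.im) = 0 := by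
      linear_combination unit_normsq σ hσn - unit_normsq lam hl - (σ.re + lam.re) * hre
    have hτσ : τ p lam = σ * u := by
      rw [hσdef, mul_assoc, hconju, mul_one]
    rcases mul_eq_zero.1 him2 with h | h
    · left
      rw [hτσ]
      congr 1
      exact Complex.ext hre (by linarith)
    · right
      rw [hτσ]
      congr 1
      exact Complex.ext (by simp [Complex.conj_re, hre])
        (by simp only [Complex.conj_im]; linarith)
  by_cases hall : ∀ lam : ℂ, ‖lam‖ = 1 → τ p lam = lam * u
  · exact Or.inl hall
  · right
    push_neg at hall
    obtain ⟨μ, hμ, hμne⟩ := hall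
    have hμc : τ p μ = (starRingEnd ℂ) μ * u := (step μ hμ).resolve_left hμne
    have hμim : μ.im ≠ 0 := by
      intro h0
      exact hμne (by rw [hμc, Complex.conj_eq_iff_im.2 h0])
    intro lam hl
    rcases step lam hl with hcase | hcase
    · -- show lam.im = 0, so the two options coincide
      have hτl : ‖τ p lam‖ = 1 := (hφτ p hp lam hl).2.1
      have hτμ : ‖τ p μ‖ = 1 := (hφτ p hp μ hμ).2.1
      have hd := dot_eq hτl hτμ hl hμ (key lam μ hl hμ)
      rw [hcase, hμc] at hd
      simp only [Complex.mul_re, Complex.mul_im, Complex.conj_re, Complex.conj_im] at hd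
      have hun := unit_normsq u hu
      have hprod : lam.im * μ.im = 0 := by
        linear_combination (1/2 : ℝ) * (lam.re * μ.re - lam.im * μ.im) * hun - (1/2 : ℝ) * hd
      have hlim : lam.im = 0 := by
        rcases mul_eq_zero.1 hprod with h | h
        · exact h
        · exact absurd h hμim
      rw [hcase, Complex.conj_eq_iff_im.2 hlim]
    · exact hcase
end

section
/- Let Y be a locally compact Hausdorff space. Then the real Banach space C₀(Y, ℝ) of real-valued continuous functions vanishing at infinity on Y, with the supremum norm, satisfies the Mazur-Ulam property: every surjective isometry from the unit sphere of C₀(Y, ℝ) onto the unit sphere of any real Banach space extends to a surjective real-linear isometry between the whole spaces. -/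
open scoped ZeroAtInfty
open Filter Topology Set Metric
set_option linter.unusedSectionVars false

namespace Stmt13

section C0Basics

variable {Y : Type*} [TopologicalSpace Y] [LocallyCompactSpace Y] [T2Space Y]

lemma abs_apply_le_norm (f : C₀(Y, ℝ)) (x : Y) : |f x| ≤ ‖f‖ := by
  have h := BoundedContinuousFunction.norm_coe_le_norm f.toBCF x
  simpa [ZeroAtInftyContinuousMap.norm_toBCF_eq_norm, Real.norm_eq_abs] using h

lemma norm_le_of_forall {f : C₀(Y, ℝ)} {c : ℝ} (hc : 0 ≤ c) (h : ∀ x, |f x| ≤ c) :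
    ‖f‖ ≤ c := by
  rw [← ZeroAtInftyContinuousMap.norm_toBCF_eq_norm]
  exact (BoundedContinuousFunction.norm_le hc).2 (by simpa [Real.norm_eq_abs] using h)

lemma norm_eq_one_of {f : C₀(Y, ℝ)} (h1 : ∀ x, |f x| ≤ 1) {x₀ : Y} (hx₀ : |f x₀| = 1) :
    ‖f‖ = 1 :=
  le_antisymm (norm_le_of_forall zero_le_one h1) (hx₀ ▸ abs_apply_le_norm f x₀)

/-- The sup norm of a nonzero `C₀` function is attained. -/
lemma exists_norm_attained {f : C₀(Y, ℝ)} (hf : f ≠ 0) : ∃ x, |f x| = ‖f‖ := by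
  have hr : 0 < ‖f‖ := norm_pos_iff.mpr hf
  have h : ∀ᶠ x in cocompact Y, dist (f x) 0 < ‖f‖ / 2 :=
    Metric.tendsto_nhds.mp (zero_at_infty f) (‖f‖ / 2) (by positivity)
  have h' : ∀ᶠ x in cocompact Y, |f x| < ‖f‖ / 2 := by
    simpa [Real.dist_eq] using h
  rw [Filter.hasBasis_cocompact.eventually_iff] at h'
  obtain ⟨K, hK, hKf⟩ := h'
  have hx₀ : ∃ x₀, ‖f‖ / 2 < |f x₀| := by
    by_contra hcon
    push_neg at hcon
    have : ‖f‖ ≤ ‖f‖ / 2 := norm_le_of_forall (by positivity) hcon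
    linarith
  obtain ⟨x₀, hx₀⟩ := hx₀
  have hx₀K : x₀ ∈ K := by
    by_contra hx
    have := hKf hx
    linarith
  obtain ⟨z, hzK, hz⟩ := hK.exists_isMaxOn ⟨x₀, hx₀K⟩ ((map_continuous f).abs.continuousOn)
  refine ⟨z, le_antisymm (abs_apply_le_norm f z) ?_⟩
  have hzb : ‖f‖ / 2 < |f z| := lt_of_lt_of_le hx₀ (hz hx₀K)
  apply norm_le_of_forall (abs_nonneg _)
  intro x
  by_cases hxK : x ∈ K
  · exact hz hxK
  · have := hKf hxK
    linarith

/-- If `‖f + g‖ = 2` with `‖f‖ = 1`, `g` valued in `[0,1]`, there is a common peak. -/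
lemma exists_common_peak {f g : C₀(Y, ℝ)} (hf : ‖f‖ = 1) (hg0 : ∀ x, 0 ≤ g x)
    (hg1 : ∀ x, g x ≤ 1) (h2 : ‖f + g‖ = 2) : ∃ z, f z = 1 ∧ g z = 1 := by
  have hfg : f + g ≠ 0 := by
    intro h
    rw [h, norm_zero] at h2
    norm_num at h2
  obtain ⟨z, hz⟩ := exists_norm_attained hfg
  rw [h2] at hz
  have hza : (f + g) z = f z + g z := rfl
  rw [hza] at hz
  have h1 : |f z| ≤ 1 := hf ▸ abs_apply_le_norm f z
  have h1' := abs_le.mp h1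
  rcases (abs_eq (by norm_num : (0:ℝ) ≤ 2)).mp hz with h | h
  · exact ⟨z, by linarith [hg1 z, h1'.1, h1'.2], by linarith [hg1 z, h1'.1, h1'.2]⟩
  · exfalso; linarith [hg0 z, h1'.1, h1'.2]

/-- If `‖f - g‖ = 2` with `‖f‖ = 1`, `g` valued in `[0,1]`, there is an antipodal peak. -/
lemma exists_antipodal_peak {f g : C₀(Y, ℝ)} (hf : ‖f‖ = 1) (hg0 : ∀ x, 0 ≤ g x)
    (hg1 : ∀ x, g x ≤ 1) (h2 : ‖f - g‖ = 2) : ∃ z, f z = -1 ∧ g z = 1 := by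
  have hfg : f - g ≠ 0 := by
    intro h
    rw [h, norm_zero] at h2
    norm_num at h2
  obtain ⟨z, hz⟩ := exists_norm_attained hfg
  rw [h2] at hz
  have hza : (f - g) z = f z - g z := rfl
  rw [hza] at hz
  have h1 : |f z| ≤ 1 := hf ▸ abs_apply_le_norm f z
  have h1' := abs_le.mp h1
  rcases (abs_eq (by norm_num : (0:ℝ) ≤ 2)).mp hz with h | h
  · exfalso; linarith [hg0 z, h1'.1, h1'.2]
  · exact ⟨z, by linarith [hg1 z, h1'.1, h1'.2], by linarith [hg1 z, h1'.1, h1'.2]⟩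

/-- Flat Urysohn bump: `p` valued in `[0,1]`, `{p = 1}` a neighborhood of `y` inside `V`,
compactly supported (hence in `C₀`). -/
lemma exists_bump (y : Y) {V : Set Y} (hV : V ∈ 𝓝 y) :
    ∃ p : C₀(Y, ℝ), (∀ x, 0 ≤ p x) ∧ (∀ x, p x ≤ 1) ∧ {x | p x = 1} ∈ 𝓝 y ∧
      {x | p x = 1} ⊆ V ∧ ‖p‖ = 1 := by
  obtain ⟨N, ⟨hNy, hNc⟩, hNV⟩ := (compact_basis_nhds y).mem_iff.mp hV
  have hiN : interior N ∈ 𝓝 y := isOpen_interior.mem_nhds (mem_interior_iff_mem_nhds.mpr hNy)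
  obtain ⟨K, ⟨hKy, hKc⟩, hKN⟩ := (compact_basis_nhds y).mem_iff.mp hiN
  obtain ⟨q, hq1, hq0, hqsupp, hqIcc⟩ :=
    exists_continuous_one_zero_of_isCompact hKc isOpen_interior.isClosed_compl
      (disjoint_compl_right_iff_subset.mpr hKN)
  have hten : Tendsto q (cocompact Y) (𝓝 0) := by
    have hev : ∀ᶠ x in cocompact Y, q x = 0 := by
      rw [Filter.hasBasis_cocompact.eventually_iff]
      exact ⟨tsupport q, hqsupp, fun x hx => image_eq_zero_of_notMem_tsupport hx⟩
    exact Filter.Tendsto.congr' (hev.mono fun x h => h.symm) tendsto_const_nhds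
  set p : C₀(Y, ℝ) := ⟨q, hten⟩ with hp
  have hpq : ∀ x, p x = q x := fun _ => rfl
  have hp0 : ∀ x, 0 ≤ p x := fun x => (hqIcc x).1
  have hp1 : ∀ x, p x ≤ 1 := fun x => (hqIcc x).2
  have hmem : {x | p x = 1} ∈ 𝓝 y := by
    refine Filter.mem_of_superset hKy fun x hx => ?_
    exact hq1 hx
  refine ⟨p, hp0, hp1, hmem, ?_, ?_⟩
  · intro x hx
    simp only [Set.mem_setOf_eq] at hx
    by_contra hxV
    have hxN : x ∉ interior N := fun hm => hxV (hNV (interior_subset hm))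
    have := hq0 hxN
    simp only [Pi.zero_apply] at this
    rw [hpq x, this] at hx
    norm_num at hx
  · have hy1 : p y = 1 := hq1 (mem_of_mem_nhds hKy)
    exact norm_eq_one_of (fun x => abs_le.mpr ⟨by linarith [hp0 x], hp1 x⟩)
      (by rw [hy1]; norm_num)

/-- `min (f x) 1` as an element of `C₀`. -/
noncomputable def min1 (f : C₀(Y, ℝ)) : C₀(Y, ℝ) :=
  ⟨⟨fun x => min (f x) 1, (map_continuous f).min continuous_const⟩, by
    have : Tendsto (fun x => min (f x) 1) (cocompact Y) (𝓝 (min 0 1)) :=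
      (zero_at_infty f).min tendsto_const_nhds
    simpa using this⟩

@[simp] lemma min1_apply (f : C₀(Y, ℝ)) (x : Y) : min1 f x = min (f x) 1 := rfl

/-- `max (f x) (-1)` as an element of `C₀`. -/
noncomputable def maxneg1 (f : C₀(Y, ℝ)) : C₀(Y, ℝ) :=
  ⟨⟨fun x => max (f x) (-1), (map_continuous f).max continuous_const⟩, by
    have : Tendsto (fun x => max (f x) (-1)) (cocompact Y) (𝓝 (max 0 (-1))) :=
      (zero_at_infty f).max tendsto_const_nhds
    simpa using this⟩

@[simp] lemma maxneg1_apply (f : C₀(Y, ℝ)) (x : Y) : maxneg1 f x = max (f x) (-1) := rfl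

lemma norm_smul_c0 (c : ℝ) (f : C₀(Y, ℝ)) : ‖c • f‖ = |c| * ‖f‖ := by
  rw [← ZeroAtInftyContinuousMap.norm_toBCF_eq_norm,
    ← ZeroAtInftyContinuousMap.norm_toBCF_eq_norm]
  have h : (c • f).toBCF = c • f.toBCF := by
    ext x
    rfl
  rw [h, norm_smul, Real.norm_eq_abs]

lemma smul_apply'' (c : ℝ) (f : C₀(Y, ℝ)) (x : Y) : (c • f) x = c * f x := by
  simp [ZeroAtInftyContinuousMap.coe_smul]

lemma sub_apply'' (f g : C₀(Y, ℝ)) (x : Y) : (f - g) x = f x - g x := by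
  simp [ZeroAtInftyContinuousMap.coe_sub]

lemma add_apply'' (f g : C₀(Y, ℝ)) (x : Y) : (f + g) x = f x + g x := by
  simp [ZeroAtInftyContinuousMap.coe_add]

lemma add_smul_apply (v p : C₀(Y, ℝ)) (c : ℝ) (x : Y) : (v + c • p) x = v x + c * p x := by
  simp [ZeroAtInftyContinuousMap.coe_add, ZeroAtInftyContinuousMap.coe_smul]

lemma sub_smul_apply (v p : C₀(Y, ℝ)) (c : ℝ) (x : Y) : (v - c • p) x = v x - c * p x := by
  simp [ZeroAtInftyContinuousMap.coe_sub, ZeroAtInftyContinuousMap.coe_smul]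

end C0Basics

section ESide

variable {E : Type*} [NormedAddCommGroup E] [NormedSpace ℝ E]

/-- Any unit vector is contained in a maximal convex subset of the unit sphere. -/
lemma exists_maximal_convex (e₀ : E) (he₀ : ‖e₀‖ = 1) :
    ∃ G : Set E, G ⊆ {e | ‖e‖ = 1} ∧ Convex ℝ G ∧ e₀ ∈ G ∧
      ∀ C : Set E, C ⊆ {e | ‖e‖ = 1} → Convex ℝ C → G ⊆ C → C = G := by
  set S : Set (Set E) := {C | C ⊆ {e | ‖e‖ = 1} ∧ Convex ℝ C} with hS
  have hzorn := zorn_subset_nonempty S ?_ {e₀} ?_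
  · obtain ⟨G, hG0, hGmax⟩ := hzorn
    refine ⟨G, hGmax.prop.1, hGmax.prop.2, hG0 rfl, ?_⟩
    intro C hC1 hC2 hGC
    exact subset_antisymm (hGmax.2 ⟨hC1, hC2⟩ hGC) hGC
  · intro c hcS hchain hcne
    refine ⟨⋃₀ c, ⟨?_, ?_⟩, fun s hs => subset_sUnion_of_mem hs⟩
    · rintro e ⟨s, hs, hes⟩
      exact (hcS hs).1 hes
    · intro x hx y hy a b ha hb hab
      obtain ⟨s, hs, hxs⟩ := hx
      obtain ⟨t, ht, hyt⟩ := hy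
      rcases hchain.total hs ht with h | h
      · exact subset_sUnion_of_mem ht ((hcS ht).2 (h hxs) hyt ha hb hab)
      · exact subset_sUnion_of_mem hs ((hcS hs).2 hxs (h hyt) ha hb hab)
  · exact ⟨Set.singleton_subset_iff.mpr he₀, convex_singleton e₀⟩

/-- Eidelheit separation: a convex subset of the unit sphere lies in a hyperplane `ψ = 1`
with `‖ψ‖ ≤ 1`. -/
lemma exists_support_functional {G : Set E} (hG : G ⊆ {e | ‖e‖ = 1}) (hc : Convex ℝ G)
    (hne : G.Nonempty) : ∃ ψ : E →L[ℝ] ℝ, (∀ e, |ψ e| ≤ ‖e‖) ∧ ∀ e ∈ G, ψ e = 1 := by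
  have hdisj : Disjoint (ball (0 : E) 1) G := by
    rw [Set.disjoint_left]
    intro e he heG
    rw [mem_ball_zero_iff] at he
    have := hG heG
    simp only [Set.mem_setOf_eq] at this
    linarith
  obtain ⟨φ, u, hball, hGu⟩ :=
    geometric_hahn_banach_open (convex_ball (0 : E) 1) isOpen_ball hc hdisj
  have hu : 0 < u := by
    have := hball 0 (mem_ball_self one_pos)
    simpa using this
  have hkey : ∀ e : E, |φ e| ≤ u * ‖e‖ := by
    intro e
    rcases eq_or_ne e 0 with rfl | he
    · simp
    have hne' : 0 < ‖e‖ := norm_pos_iff.mpr he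
    have hstep : ∀ s : ℝ, 0 < s → s < 1 → s * |φ e| ≤ u * ‖e‖ := by
      intro s hs hs1
      have hmem : (s / ‖e‖) • e ∈ ball (0 : E) 1 := by
        rw [mem_ball_zero_iff, norm_smul, Real.norm_eq_abs,
          abs_of_pos (div_pos hs hne'), div_mul_cancel₀ _ hne'.ne']
        exact hs1
      have hmem' : -((s / ‖e‖) • e) ∈ ball (0 : E) 1 := by
        rw [mem_ball_zero_iff, norm_neg, norm_smul, Real.norm_eq_abs,
          abs_of_pos (div_pos hs hne'), div_mul_cancel₀ _ hne'.ne']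
        exact hs1
      have h1 := hball _ hmem
      have h2 := hball _ hmem'
      rw [map_smul] at h1
      rw [map_neg, map_smul] at h2
      simp only [smul_eq_mul] at h1 h2
      have habs : (s / ‖e‖) * |φ e| ≤ u := by
        rcases abs_cases (φ e) with ⟨h, _⟩ | ⟨h, _⟩
        · rw [h]; linarith
        · rw [h]; nlinarith [div_pos hs hne']
      calc s * |φ e| = ((s / ‖e‖) * |φ e|) * ‖e‖ := by field_simp
        _ ≤ u * ‖e‖ := by nlinarith
    by_contra hcon
    push_neg at hcon
    have habspos : 0 < |φ e| := lt_of_le_of_lt (by positivity) hcon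
    set s := (u * ‖e‖ + |φ e|) / (2 * |φ e|) with hsdef
    have hs0 : 0 < s := by positivity
    have hs1 : s < 1 := by
      rw [hsdef, div_lt_one (by positivity)]
      linarith
    have := hstep s hs0 hs1
    rw [hsdef] at this
    have heq : (u * ‖e‖ + |φ e|) / (2 * |φ e|) * |φ e| = (u * ‖e‖ + |φ e|) / 2 := by
      field_simp
    rw [heq] at this
    linarith
  refine ⟨u⁻¹ • φ, ?_, ?_⟩
  · intro e
    have := hkey e
    simp only [ContinuousLinearMap.smul_apply, smul_eq_mul, abs_mul, abs_of_pos
      (inv_pos.mpr hu)]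
    rw [inv_mul_le_iff₀ hu]
    linarith
  · intro e heG
    have h1 : u ≤ φ e := hGu e heG
    have h2 : |φ e| ≤ u * ‖e‖ := hkey e
    have h3 : ‖e‖ = 1 := hG heG
    rw [h3, mul_one] at h2
    have h4 : φ e = u := le_antisymm (le_trans (le_abs_self _) h2) h1
    simp only [ContinuousLinearMap.smul_apply, smul_eq_mul, h4]
    field_simp

/-- If `x` is a unit vector with `‖x + e‖ = 2` for all `e` in a maximal convex subset `G`
of the sphere, then `x ∈ G`. -/
lemma mem_maximal_convex {G : Set E} (hG : G ⊆ {e | ‖e‖ = 1}) (hc : Convex ℝ G)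
    (hmax : ∀ C : Set E, C ⊆ {e | ‖e‖ = 1} → Convex ℝ C → G ⊆ C → C = G)
    (hne : G.Nonempty) {x : E} (hx : ‖x‖ = 1) (hsum : ∀ e ∈ G, ‖x + e‖ = 2) : x ∈ G := by
  have hGH : G ⊆ convexHull ℝ (insert x G) :=
    (Set.subset_insert x G).trans (subset_convexHull ℝ _)
  have hsub : convexHull ℝ (insert x G) ⊆ {e | ‖e‖ = 1} := by
    intro z hz
    rw [convexHull_insert hne, mem_convexJoin] at hz
    obtain ⟨x', hx', w, hw, hzw⟩ := hz
    rw [Set.mem_singleton_iff] at hx'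
    rw [hx'] at hzw
    rw [hc.convexHull_eq] at hw
    obtain ⟨a, b, ha, hb, hab, rfl⟩ := hzw
    have hw1 : ‖w‖ = 1 := hG hw
    have hxw : ‖x + w‖ = 2 := hsum w hw
    have hle : ‖a • x + b • w‖ ≤ 1 := by
      calc ‖a • x + b • w‖ ≤ ‖a • x‖ + ‖b • w‖ := norm_add_le _ _
        _ = a + b := by
            rw [norm_smul, norm_smul, hx, hw1, Real.norm_eq_abs, Real.norm_eq_abs,
              abs_of_nonneg ha, abs_of_nonneg hb, mul_one, mul_one]
        _ = 1 := hab
    have hswap : ‖b • x + a • w‖ ≤ 1 := by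
      calc ‖b • x + a • w‖ ≤ ‖b • x‖ + ‖a • w‖ := norm_add_le _ _
        _ = b + a := by
            rw [norm_smul, norm_smul, hx, hw1, Real.norm_eq_abs, Real.norm_eq_abs,
              abs_of_nonneg ha, abs_of_nonneg hb, mul_one, mul_one]
        _ = 1 := by linarith
    have hid : x + w = (a • x + b • w) + (b • x + a • w) := by
      have h2 : (a + b) • x + (a + b) • w = (a • x + b • w) + (b • x + a • w) := by
        rw [add_smul, add_smul]
        abel
      rw [hab, one_smul, one_smul] at h2
      exact h2
    have hge : (1 : ℝ) ≤ ‖a • x + b • w‖ := by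
      have htri := norm_add_le (a • x + b • w) (b • x + a • w)
      rw [← hid, hxw] at htri
      linarith
    exact le_antisymm hle hge
  have heq := hmax _ hsub (convex_convexHull ℝ _) hGH
  rw [← heq]
  exact subset_convexHull ℝ _ (Set.mem_insert x G)

/-- Midpoints of a convex subset of the sphere give norm-2 sums. -/
lemma norm_add_eq_two_of_convex {G : Set E} (hG : G ⊆ {e | ‖e‖ = 1}) (hc : Convex ℝ G)
    {a b : E} (ha : a ∈ G) (hb : b ∈ G) : ‖a + b‖ = 2 := by
  have hm : (1/2 : ℝ) • a + (1/2 : ℝ) • b ∈ G :=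
    hc ha hb (by norm_num) (by norm_num) (by norm_num)
  have h1 : ‖(1/2 : ℝ) • a + (1/2 : ℝ) • b‖ = 1 := hG hm
  have h2 : (1/2 : ℝ) • a + (1/2 : ℝ) • b = (1/2 : ℝ) • (a + b) := by
    rw [smul_add]
  rw [h2, norm_smul, Real.norm_eq_abs] at h1
  rw [abs_of_pos (by norm_num : (0:ℝ) < 1/2)] at h1
  linarith

end ESide

section Main

variable {Y : Type*} [TopologicalSpace Y] [LocallyCompactSpace Y] [T2Space Y]
variable {E : Type*} [NormedAddCommGroup E] [NormedSpace ℝ E]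

set_option maxHeartbeats 3000000 in
/-- Antipodality: a surjective isometry between unit spheres is odd. -/
lemma anti (T : C₀(Y, ℝ) → E)
    (hmap : ∀ f : C₀(Y, ℝ), ‖f‖ = 1 → ‖T f‖ = 1)
    (hsurj : ∀ b : E, ‖b‖ = 1 → ∃ f : C₀(Y, ℝ), ‖f‖ = 1 ∧ T f = b)
    (hiso : ∀ f g : C₀(Y, ℝ), ‖f‖ = 1 → ‖g‖ = 1 → ‖T f - T g‖ = ‖f - g‖) :
    ∀ f : C₀(Y, ℝ), ‖f‖ = 1 → T (-f) = -T f := by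
  obtain ⟨finv, hfinv⟩ : ∃ finv : E → C₀(Y, ℝ),
      ∀ b : E, ‖b‖ = 1 → ‖finv b‖ = 1 ∧ T (finv b) = b := by
    refine ⟨fun b => if h : ‖b‖ = 1 then (hsurj b h).choose else 0, fun b hb => ?_⟩
    simp only [dif_pos hb]
    exact (hsurj b hb).choose_spec
  set σ : C₀(Y, ℝ) → C₀(Y, ℝ) := fun f => finv (-(T f)) with hσdef
  have hTnorm : ∀ f : C₀(Y, ℝ), ‖f‖ = 1 → ‖-(T f)‖ = 1 := fun f hf => by
    rw [norm_neg]; exact hmap f hf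
  have hσ1 : ∀ f : C₀(Y, ℝ), ‖f‖ = 1 → ‖σ f‖ = 1 := fun f hf => (hfinv _ (hTnorm f hf)).1
  have hσT : ∀ f : C₀(Y, ℝ), ‖f‖ = 1 → T (σ f) = -(T f) := fun f hf =>
    (hfinv _ (hTnorm f hf)).2
  have hSYM : ∀ f h : C₀(Y, ℝ), ‖f‖ = 1 → ‖h‖ = 1 → ‖σ f - h‖ = ‖σ h - f‖ := by
    intro f h hf hh
    have e1 : ‖σ f - h‖ = ‖T (σ f) - T h‖ := (hiso _ _ (hσ1 f hf) hh).symm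
    have e2 : ‖σ h - f‖ = ‖T (σ h) - T f‖ := (hiso _ _ (hσ1 h hh) hf).symm
    rw [e1, e2, hσT f hf, hσT h hh]
    have e3 : -T f - T h = -(T f + T h) := by abel
    have e4 : -T h - T f = -(T f + T h) := by abel
    rw [e3, e4]
  have hDISP : ∀ f : C₀(Y, ℝ), ‖f‖ = 1 → ‖σ f - f‖ = 2 := by
    intro f hf
    rw [← hiso _ _ (hσ1 f hf) hf, hσT f hf]
    have e3 : -T f - T f = -((2:ℝ) • T f) := by
      rw [two_smul]; abel
    rw [e3, norm_neg, norm_smul, hmap f hf]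
    norm_num
  -- Step 1 for nonnegative bumps
  have hstep1 : ∀ p : C₀(Y, ℝ), ‖p‖ = 1 → (∀ x, 0 ≤ p x) → (∀ x, p x ≤ 1) →
      ∃ z, σ p z = -1 ∧ p z = 1 :=
    fun p hp hp0 hp1 => exists_antipodal_peak (hσ1 p hp) hp0 hp1 (hDISP p hp)
  -- Step 1 mirrored, for nonpositive bumps -p
  have hstep1' : ∀ p : C₀(Y, ℝ), ‖p‖ = 1 → (∀ x, 0 ≤ p x) → (∀ x, p x ≤ 1) →
      ∃ z, σ (-p) z = 1 ∧ p z = 1 := by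
    intro p hp hp0 hp1
    have hnp : ‖-p‖ = 1 := by rw [norm_neg]; exact hp
    have h2 : ‖σ (-p) + p‖ = 2 := by
      have := hDISP (-p) hnp
      have e : σ (-p) - -p = σ (-p) + p := by abel
      rw [e] at this
      exact this
    exact exists_common_peak (hσ1 (-p) hnp) hp0 hp1 h2
  -- A1 : locally 1 near y implies σ h y = -1
  have hA1 : ∀ (h : C₀(Y, ℝ)), ‖h‖ = 1 → ∀ (W : Set Y) (y : Y), W ∈ 𝓝 y →
      (∀ x ∈ W, h x = 1) → σ h y = -1 := by
    intro h hh W y hW hhW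
    have hcl : y ∈ closure {x | σ h x = -1} := by
      rw [mem_closure_iff_nhds]
      intro V hV
      obtain ⟨p, hp0, hp1, hpmem, hpsub, hpnorm⟩ := exists_bump y (Filter.inter_mem hV hW)
      obtain ⟨z₁, hz₁σ, hz₁p⟩ := hstep1 p hpnorm hp0 hp1
      have hz₁W : z₁ ∈ W := (hpsub hz₁p).2
      have hhz₁ : h z₁ = 1 := hhW _ hz₁W
      have hd : ‖σ p - h‖ = 2 := by
        apply le_antisymm
        · calc ‖σ p - h‖ ≤ ‖σ p‖ + ‖h‖ := norm_sub_le _ _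
            _ = 2 := by rw [hσ1 p hpnorm, hh]; norm_num
        · have hpt : |(σ p - h) z₁| = 2 := by
            have : (σ p - h) z₁ = σ p z₁ - h z₁ := sub_apply'' _ _ _
            rw [this, hz₁σ, hhz₁]
            norm_num
          rw [← hpt]
          exact abs_apply_le_norm _ z₁
      have hd' : ‖σ h - p‖ = 2 := by
        rw [hSYM h p hh hpnorm]
        exact hd
      obtain ⟨z₂, hz₂σ, hz₂p⟩ := exists_antipodal_peak (hσ1 h hh) hp0 hp1 hd'
      exact ⟨z₂, (hpsub hz₂p).1, hz₂σ⟩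
    have hcls : IsClosed {x | σ h x = -1} := isClosed_eq (map_continuous (σ h)) continuous_const
    exact hcls.closure_subset hcl
  -- A1 mirrored : locally -1 near y implies σ h y = 1
  have hA1' : ∀ (h : C₀(Y, ℝ)), ‖h‖ = 1 → ∀ (W : Set Y) (y : Y), W ∈ 𝓝 y →
      (∀ x ∈ W, h x = -1) → σ h y = 1 := by
    intro h hh W y hW hhW
    have hcl : y ∈ closure {x | σ h x = 1} := by
      rw [mem_closure_iff_nhds]
      intro V hV
      obtain ⟨p, hp0, hp1, hpmem, hpsub, hpnorm⟩ := exists_bump y (Filter.inter_mem hV hW)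
      obtain ⟨z₁, hz₁σ, hz₁p⟩ := hstep1' p hpnorm hp0 hp1
      have hz₁W : z₁ ∈ W := (hpsub hz₁p).2
      have hhz₁ : h z₁ = -1 := hhW _ hz₁W
      have hnp : ‖-p‖ = 1 := by rw [norm_neg]; exact hpnorm
      have hd : ‖σ (-p) - h‖ = 2 := by
        apply le_antisymm
        · calc ‖σ (-p) - h‖ ≤ ‖σ (-p)‖ + ‖h‖ := norm_sub_le _ _
            _ = 2 := by rw [hσ1 (-p) hnp, hh]; norm_num
        · have hpt : |(σ (-p) - h) z₁| = 2 := by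
            have : (σ (-p) - h) z₁ = σ (-p) z₁ - h z₁ := sub_apply'' _ _ _
            rw [this, hz₁σ, hhz₁]
            norm_num
          rw [← hpt]
          exact abs_apply_le_norm _ z₁
      have hd' : ‖σ h + p‖ = 2 := by
        have := hSYM h (-p) hh hnp
        have e : σ h - -p = σ h + p := by abel
        rw [e] at this
        rw [this, hd]
      obtain ⟨z₂, hz₂σ, hz₂p⟩ := exists_common_peak (hσ1 h hh) hp0 hp1 hd'
      exact ⟨z₂, (hpsub hz₂p).1, hz₂σ⟩
    have hcls : IsClosed {x | σ h x = 1} := isClosed_eq (map_continuous (σ h)) continuous_const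
    exact hcls.closure_subset hcl
  -- main pointwise identity
  have hmain : ∀ h : C₀(Y, ℝ), ‖h‖ = 1 → ∀ y, σ h y = -(h y) := by
    intro h hh y
    set v : C₀(Y, ℝ) := σ h with hvdef
    have hv1 : ∀ x, |v x| ≤ 1 := by
      intro x
      have := abs_apply_le_norm v x
      rw [hσ1 h hh] at this
      exact this
    have hh1 : ∀ x, |h x| ≤ 1 := by
      intro x
      have := abs_apply_le_norm h x
      rw [hh] at this
      exact this
    have hineq1 : v y ≤ -(h y) := by
      apply le_of_forall_pos_le_add
      intro ε hε
      have hVopen : IsOpen {x | v y - ε < v x} :=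
        isOpen_lt continuous_const (map_continuous v)
      have hVy : y ∈ {x | v y - ε < v x} := by
        simp only [Set.mem_setOf_eq]
        linarith
      obtain ⟨p, hp0, hp1, hpmem, hpsub, hpnorm⟩ := exists_bump y (hVopen.mem_nhds hVy)
      set c : ℝ := 1 - v y + ε with hcdef
      have hc0 : 0 ≤ c := by
        have := abs_le.mp (hv1 y)
        rw [hcdef]
        linarith [this.2]
      set w : C₀(Y, ℝ) := min1 (v + c • p) with hwdef
      have hwapp : ∀ x, w x = min (v x + c * p x) 1 := by
        intro x
        rw [hwdef, min1_apply, add_smul_apply]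
      have hwflat : ∀ x, p x = 1 → w x = 1 := by
        intro x hx
        have hxV : v y - ε < v x := hpsub hx
        rw [hwapp, hx, mul_one]
        apply min_eq_right
        rw [hcdef]
        linarith
      have hwle : ∀ x, |w x| ≤ 1 := by
        intro x
        rw [hwapp, abs_le]
        constructor
        · apply le_min
          · have := abs_le.mp (hv1 x)
            nlinarith [hp0 x, this.1]
          · norm_num
        · exact min_le_right _ _
      have hpy : p y = 1 := by
        have : y ∈ {x | p x = 1} := mem_of_mem_nhds hpmem
        exact this
      have hwnorm : ‖w‖ = 1 := by
        apply norm_eq_one_of hwle (x₀ := y)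
        rw [hwflat y hpy]
        norm_num
      have hσwy : σ w y = -1 := hA1 w hwnorm {x | p x = 1} y hpmem fun x hx => hwflat x hx
      have hvw : ‖v - w‖ ≤ c := by
        apply norm_le_of_forall hc0
        intro x
        have hwx := hwapp x
        have hvx : v x ≤ w x := by
          rw [hwx]
          apply le_min
          · nlinarith [hp0 x]
          · exact (abs_le.mp (hv1 x)).2
        have hwx2 : w x - v x ≤ c := by
          have : w x ≤ v x + c * p x := by rw [hwx]; exact min_le_left _ _
          nlinarith [hp1 x, hp0 x]
        have : (v - w) x = v x - w x := sub_apply'' _ _ _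
        rw [this, abs_le]
        constructor <;> linarith
      have h1 : ‖σ w - h‖ = ‖v - w‖ := by
        rw [hSYM w h hwnorm hh]
      have h2 : |σ w y - h y| ≤ ‖σ w - h‖ := by
        have : (σ w - h) y = σ w y - h y := sub_apply'' _ _ _
        rw [← this]
        exact abs_apply_le_norm _ y
      rw [hσwy, h1] at h2
      have h3 : |(-1 : ℝ) - h y| = 1 + h y := by
        rw [abs_sub_comm, abs_of_nonneg (by linarith [(abs_le.mp (hh1 y)).1])]
        ring
      rw [h3] at h2
      have h4 : 1 + h y ≤ c := le_trans h2 hvw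
      rw [hcdef] at h4
      linarith
    have hineq2 : -(h y) ≤ v y := by
      have hstep : ∀ ε : ℝ, 0 < ε → -(h y) ≤ v y + ε := by
        intro ε hε
        have hVopen : IsOpen {x | v x < v y + ε} :=
          isOpen_lt (map_continuous v) continuous_const
        have hVy : y ∈ {x | v x < v y + ε} := by
          simp only [Set.mem_setOf_eq]
          linarith
        obtain ⟨p, hp0, hp1, hpmem, hpsub, hpnorm⟩ := exists_bump y (hVopen.mem_nhds hVy)
        set c : ℝ := 1 + v y + ε with hcdef
        have hc0 : 0 ≤ c := by
          have := abs_le.mp (hv1 y)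
          rw [hcdef]
          linarith [this.1]
        set w : C₀(Y, ℝ) := maxneg1 (v - c • p) with hwdef
        have hwapp : ∀ x, w x = max (v x - c * p x) (-1) := by
          intro x
          rw [hwdef, maxneg1_apply, sub_smul_apply]
        have hwflat : ∀ x, p x = 1 → w x = -1 := by
          intro x hx
          have hxV : v x < v y + ε := hpsub hx
          rw [hwapp, hx, mul_one]
          apply max_eq_right
          rw [hcdef]
          linarith
        have hwle : ∀ x, |w x| ≤ 1 := by
          intro x
          rw [hwapp, abs_le]
          constructor
          · exact le_max_right _ _
          · apply max_le
            · have := abs_le.mp (hv1 x)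
              nlinarith [hp0 x, this.2]
            · norm_num
        have hpy : p y = 1 := by
          have : y ∈ {x | p x = 1} := mem_of_mem_nhds hpmem
          exact this
        have hwnorm : ‖w‖ = 1 := by
          apply norm_eq_one_of hwle (x₀ := y)
          rw [hwflat y hpy]
          norm_num
        have hσwy : σ w y = 1 := hA1' w hwnorm {x | p x = 1} y hpmem fun x hx => hwflat x hx
        have hvw : ‖v - w‖ ≤ c := by
          apply norm_le_of_forall hc0
          intro x
          have hwx := hwapp x
          have hvx : w x ≤ v x := by
            rw [hwx]
            apply max_le
            · nlinarith [hp0 x]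
            · exact (abs_le.mp (hv1 x)).1
          have hwx2 : v x - w x ≤ c := by
            have : v x - c * p x ≤ w x := by rw [hwx]; exact le_max_left _ _
            nlinarith [hp1 x, hp0 x]
          have : (v - w) x = v x - w x := sub_apply'' _ _ _
          rw [this, abs_le]
          constructor <;> linarith
        have h1 : ‖σ w - h‖ = ‖v - w‖ := by
          rw [hSYM w h hwnorm hh]
        have h2 : |σ w y - h y| ≤ ‖σ w - h‖ := by
          have : (σ w - h) y = σ w y - h y := sub_apply'' _ _ _
          rw [← this]
          exact abs_apply_le_norm _ y
        rw [hσwy, h1] at h2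
        have h3 : |(1 : ℝ) - h y| = 1 - h y := by
          rw [abs_of_nonneg (by linarith [(abs_le.mp (hh1 y)).2])]
        rw [h3] at h2
        have h4 : 1 - h y ≤ c := le_trans h2 hvw
        rw [hcdef] at h4
        linarith
      by_contra hcon
      push_neg at hcon
      have := hstep ((-(h y) - v y) / 2) (by linarith)
      linarith
    linarith
  intro f hf
  have h1 : σ f = -f := by
    ext y
    have := hmain f hf y
    simpa using this
  have h2 := hσT f hf
  rw [h1] at h2
  exact h2

/-- The key supporting functional at a point `y`. -/
lemma exists_functional (T : C₀(Y, ℝ) → E)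
    (hmap : ∀ f : C₀(Y, ℝ), ‖f‖ = 1 → ‖T f‖ = 1)
    (hsurj : ∀ b : E, ‖b‖ = 1 → ∃ f : C₀(Y, ℝ), ‖f‖ = 1 ∧ T f = b)
    (hiso : ∀ f g : C₀(Y, ℝ), ‖f‖ = 1 → ‖g‖ = 1 → ‖T f - T g‖ = ‖f - g‖)
    (hanti : ∀ f : C₀(Y, ℝ), ‖f‖ = 1 → T (-f) = -T f) (y : Y) :
    ∃ φ : E →L[ℝ] ℝ, (∀ e, |φ e| ≤ ‖e‖) ∧ ∀ f : C₀(Y, ℝ), ‖f‖ = 1 → f y ≤ φ (T f) := by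
  -- transfer of sums
  have hsum : ∀ a b : C₀(Y, ℝ), ‖a‖ = 1 → ‖b‖ = 1 → ‖T a + T b‖ = ‖a + b‖ := by
    intro a b ha hb
    have hnb : ‖-b‖ = 1 := by rw [norm_neg]; exact hb
    have h1 : T a + T b = T a - T (-b) := by rw [hanti b hb]; abel
    rw [h1, hiso a (-b) ha hnb]
    congr 1
    abel
  -- for each compact neighborhood, a good functional
  have hkey : ∀ N : Set Y, N ∈ 𝓝 y → IsCompact N → ∃ ψ : E →L[ℝ] ℝ,
      (∀ e, |ψ e| ≤ ‖e‖) ∧ ∀ f : C₀(Y, ℝ), ‖f‖ = 1 → sInf (f '' N) ≤ ψ (T f) := by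
    intro N hN hNc
    obtain ⟨p, hp0, hp1, hpmem, hpsub, hpnorm⟩ := exists_bump y (interior_mem_nhds.mpr hN)
    have hpsubN : {x | p x = 1} ⊆ N := hpsub.trans interior_subset
    have hTp : ‖T p‖ = 1 := hmap p hpnorm
    obtain ⟨G, hGs, hGc, hGp, hGmax⟩ := exists_maximal_convex (T p) hTp
    obtain ⟨ψ, hψb, hψ1⟩ := exists_support_functional hGs hGc ⟨T p, hGp⟩
    refine ⟨ψ, hψb, ?_⟩
    intro f hf
    have hf1 : ∀ x, |f x| ≤ 1 := by
      intro x
      have := abs_apply_le_norm f x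
      rw [hf] at this
      exact this
    have hyN : y ∈ N := mem_of_mem_nhds hN
    have himne : (f '' N).Nonempty := (Set.nonempty_of_mem hyN).image f
    have hbdd : BddBelow (f '' N) := by
      refine ⟨-1, ?_⟩
      rintro t ⟨x, _, rfl⟩
      exact (abs_le.mp (hf1 x)).1
    set m : ℝ := sInf (f '' N) with hmdef
    have hmle : ∀ x ∈ N, m ≤ f x := fun x hx => csInf_le hbdd ⟨x, hx, rfl⟩
    have hmy : m ≤ f y := hmle y hyN
    set c : ℝ := 1 - m with hcdef
    have hc0 : 0 ≤ c := by
      have := (abs_le.mp (hf1 y)).2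
      rw [hcdef]
      linarith
    set g : C₀(Y, ℝ) := min1 (f + c • p) with hgdef
    have hgapp : ∀ x, g x = min (f x + c * p x) 1 := by
      intro x
      rw [hgdef, min1_apply, add_smul_apply]
    have hgflat : ∀ x, p x = 1 → g x = 1 := by
      intro x hx
      have hxN : x ∈ N := hpsubN hx
      rw [hgapp, hx, mul_one]
      apply min_eq_right
      have := hmle x hxN
      rw [hcdef]
      linarith
    have hgle : ∀ x, |g x| ≤ 1 := by
      intro x
      rw [hgapp, abs_le]
      refine ⟨le_min ?_ (by norm_num), min_le_right _ _⟩
      nlinarith [hp0 x, (abs_le.mp (hf1 x)).1]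
    have hpy : p y = 1 := by
      have : y ∈ {x | p x = 1} := mem_of_mem_nhds hpmem
      exact this
    have hgnorm : ‖g‖ = 1 := by
      apply norm_eq_one_of hgle (x₀ := y)
      rw [hgflat y hpy]
      norm_num
    have hfg : ‖g - f‖ ≤ c := by
      apply norm_le_of_forall hc0
      intro x
      have hx1 : f x ≤ g x := by
        rw [hgapp]
        exact le_min (by nlinarith [hp0 x]) (abs_le.mp (hf1 x)).2
      have hx2 : g x - f x ≤ c := by
        have : g x ≤ f x + c * p x := by rw [hgapp]; exact min_le_left _ _
        nlinarith [hp1 x, hp0 x]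
      have : (g - f) x = g x - f x := sub_apply'' _ _ _
      rw [this, abs_le]
      constructor <;> linarith
    have hTgG : T g ∈ G := by
      apply mem_maximal_convex hGs hGc hGmax ⟨T p, hGp⟩ (hmap g hgnorm)
      intro e heG
      obtain ⟨f', hf', hTf'⟩ := hsurj e (hGs heG)
      have h2 : ‖e + T p‖ = 2 := norm_add_eq_two_of_convex hGs hGc heG hGp
      have h3 : ‖f' + p‖ = 2 := by
        rw [← hsum f' p hf' hpnorm, hTf']
        exact h2
      obtain ⟨z, hz1, hz2⟩ := exists_common_peak hf' hp0 hp1 h3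
      have hgz : g z = 1 := hgflat z hz2
      have h4 : ‖g + f'‖ = 2 := by
        apply le_antisymm
        · calc ‖g + f'‖ ≤ ‖g‖ + ‖f'‖ := norm_add_le _ _
            _ = 2 := by rw [hgnorm, hf']; norm_num
        · have hpt : |(g + f') z| = 2 := by
            have : (g + f') z = g z + f' z := add_apply'' _ _ _
            rw [this, hgz, hz1]
            norm_num
          rw [← hpt]
          exact abs_apply_le_norm _ z
      have h5 : ‖T g + e‖ = ‖g + f'‖ := by
        rw [← hTf']
        have := hsum g f' hgnorm hf'
        rw [this]
      rw [h5, h4]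
    have h5 : ψ (T g) = 1 := hψ1 _ hTgG
    have h6 : |ψ (T g) - ψ (T f)| ≤ ‖T g - T f‖ := by
      rw [← map_sub]
      exact hψb _
    rw [hiso g f hgnorm hf] at h6
    have h7 := (abs_le.mp h6).2
    have h8 : ‖g - f‖ ≤ c := hfg
    rw [h5] at h7
    have h9 : 1 - ψ (T f) ≤ c := le_trans h7 h8
    rw [hcdef] at h9
    linarith
  -- Banach-Alaoglu + finite intersection property
  have hpolar : IsCompact {ψ : WeakDual ℝ E | ∀ e, |ψ e| ≤ ‖e‖} := by
    have h1 : IsCompact (WeakDual.polar ℝ (closedBall (0 : E) 1)) :=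
      WeakDual.isCompact_polar ℝ (closedBall_mem_nhds 0 one_pos)
    have h2 : {ψ : WeakDual ℝ E | ∀ e, |ψ e| ≤ ‖e‖} =
        WeakDual.polar ℝ (closedBall (0 : E) 1) := by
      rw [WeakDual.polar_def]
      ext ψ
      constructor
      · intro hψ z hz
        rw [mem_closedBall_zero_iff] at hz
        calc ‖ψ z‖ = |ψ z| := Real.norm_eq_abs _
          _ ≤ ‖z‖ := hψ z
          _ ≤ 1 := hz
      · intro hψ e
        rcases eq_or_ne e 0 with rfl | he
        · simp
        · have hne : 0 < ‖e‖ := norm_pos_iff.mpr he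
          have hmem : ‖e‖⁻¹ • e ∈ closedBall (0 : E) 1 := by
            rw [mem_closedBall_zero_iff, norm_smul, Real.norm_eq_abs,
              abs_of_pos (inv_pos.mpr hne), inv_mul_cancel₀ hne.ne']
          have := hψ _ hmem
          rw [map_smul, smul_eq_mul, Real.norm_eq_abs, abs_mul,
            abs_of_pos (inv_pos.mpr hne)] at this
          calc |ψ e| = ‖e‖ * (‖e‖⁻¹ * |ψ e|) := by field_simp
            _ ≤ ‖e‖ * 1 := by nlinarith
            _ = ‖e‖ := mul_one _
    rw [h2]
    exact h1
  set A : Set (WeakDual ℝ E) := {ψ | ∀ e, |ψ e| ≤ ‖e‖} with hA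
  set t : {N : Set Y // N ∈ 𝓝 y ∧ IsCompact N} → Set (WeakDual ℝ E) := fun N =>
    A ∩ {ψ | ∀ f : C₀(Y, ℝ), ‖f‖ = 1 → sInf (f '' N.1) ≤ ψ (T f)} with ht
  have hιne : Nonempty {N : Set Y // N ∈ 𝓝 y ∧ IsCompact N} := by
    obtain ⟨N, hN1, hN2⟩ := local_compact_nhds (x := y) (n := univ) Filter.univ_mem
    exact ⟨⟨N, hN1, hN2.2⟩⟩
  have hAclosed : IsClosed A := by
    have : A = ⋂ e : E, {ψ : WeakDual ℝ E | |ψ e| ≤ ‖e‖} := by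
      ext ψ
      simp [hA, Set.mem_iInter]
    rw [this]
    exact isClosed_iInter fun e =>
      isClosed_le (continuous_abs.comp (WeakDual.eval_continuous e)) continuous_const
  have hBclosed : ∀ N, IsClosed
      {ψ : WeakDual ℝ E | ∀ f : C₀(Y, ℝ), ‖f‖ = 1 → sInf (f '' N) ≤ ψ (T f)} := by
    intro N
    have : {ψ : WeakDual ℝ E | ∀ f : C₀(Y, ℝ), ‖f‖ = 1 → sInf (f '' N) ≤ ψ (T f)} =
        ⋂ f : C₀(Y, ℝ), ⋂ _ : ‖f‖ = 1, {ψ : WeakDual ℝ E | sInf (f '' N) ≤ ψ (T f)} := by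
      ext ψ
      simp [Set.mem_iInter]
    rw [this]
    exact isClosed_iInter fun f => isClosed_iInter fun hf =>
      isClosed_le continuous_const (WeakDual.eval_continuous _)
  have htclosed : ∀ N, IsClosed (t N) := fun N => hAclosed.inter (hBclosed N.1)
  have htcompact : ∀ N, IsCompact (t N) := fun N => hpolar.inter_right (hBclosed N.1)
  have happ : ∀ (ψ : E →L[ℝ] ℝ) (e : E), (StrongDual.toWeakDual ψ) e = ψ e :=
    fun _ _ => rfl
  have htne : ∀ N, (t N).Nonempty := by
    intro N
    obtain ⟨ψ, hψb, hψi⟩ := hkey N.1 N.2.1 N.2.2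
    refine ⟨StrongDual.toWeakDual ψ, ⟨?_, ?_⟩⟩
    · intro e
      rw [happ]
      exact hψb e
    · intro f hf
      rw [happ]
      exact hψi f hf
  have hbddgen : ∀ (f : C₀(Y, ℝ)), ‖f‖ = 1 → ∀ s : Set Y, BddBelow (f '' s) := by
    intro f hf s
    refine ⟨-1, ?_⟩
    rintro b ⟨x, _, rfl⟩
    have := abs_apply_le_norm f x
    rw [hf] at this
    exact (abs_le.mp this).1
  have hdir : Directed (· ⊇ ·) t := by
    intro i j
    refine ⟨⟨i.1 ∩ j.1, Filter.inter_mem i.2.1 j.2.1, i.2.2.inter j.2.2⟩, ?_, ?_⟩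
    · rintro ψ ⟨hψA, hψB⟩
      refine ⟨hψA, fun f hf => ?_⟩
      refine le_trans (csInf_le_csInf (hbddgen f hf _) ?_ ?_) (hψB f hf)
      · exact (Set.nonempty_of_mem
          (Set.mem_inter (mem_of_mem_nhds i.2.1) (mem_of_mem_nhds j.2.1))).image f
      · exact Set.image_mono Set.inter_subset_left
    · rintro ψ ⟨hψA, hψB⟩
      refine ⟨hψA, fun f hf => ?_⟩
      refine le_trans (csInf_le_csInf (hbddgen f hf _) ?_ ?_) (hψB f hf)
      · exact (Set.nonempty_of_mem
          (Set.mem_inter (mem_of_mem_nhds i.2.1) (mem_of_mem_nhds j.2.1))).image f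
      · exact Set.image_mono Set.inter_subset_right
  obtain ⟨φ₀, hφ₀⟩ := IsCompact.nonempty_iInter_of_directed_nonempty_isCompact_isClosed
    t hdir htne htcompact htclosed
  rw [Set.mem_iInter] at hφ₀
  obtain ⟨i0⟩ := hιne
  refine ⟨WeakDual.toStrongDual φ₀, ?_, ?_⟩
  · intro e
    exact (hφ₀ i0).1 e
  · intro f hf
    have hb : ∀ ε : ℝ, 0 < ε → f y ≤ WeakDual.toStrongDual φ₀ (T f) + ε := by
      intro ε hε
      have hVopen : IsOpen {x | f y - ε < f x} :=
        isOpen_lt continuous_const (map_continuous f)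
      have hVy : y ∈ {x | f y - ε < f x} := by
        simp only [Set.mem_setOf_eq]
        linarith
      obtain ⟨N, hN1, hN2⟩ := local_compact_nhds (hVopen.mem_nhds hVy)
      have hmem := (hφ₀ ⟨N, hN1, hN2.2⟩).2 f hf
      have hlow : f y - ε ≤ sInf (f '' N) := by
        apply le_csInf ((Set.nonempty_of_mem (mem_of_mem_nhds hN1)).image f)
        rintro b ⟨x, hx, rfl⟩
        have := hN2.1 hx
        simp only [Set.mem_setOf_eq] at this
        linarith
      have : f y - ε ≤ WeakDual.toStrongDual φ₀ (T f) := le_trans hlow hmem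
      linarith
    exact le_of_forall_pos_le_add hb

end Main

end Stmt13

open scoped ZeroAtInfty

/-- For a locally compact Hausdorff space `Y`, the real Banach space
`C₀(Y, ℝ)` satisfies the Mazur-Ulam property: every surjective isometry from its
unit sphere onto the unit sphere of any real Banach space `E` extends to a
surjective real-linear isometry. -/
theorem stmt13 {Y : Type*} [TopologicalSpace Y] [LocallyCompactSpace Y] [T2Space Y]
    (E : Type*) [NormedAddCommGroup E] [NormedSpace ℝ E] [CompleteSpace E]
    (T : C₀(Y, ℝ) → E)
    (hmap : ∀ f : C₀(Y, ℝ), ‖f‖ = 1 → ‖T f‖ = 1)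
    (hsurj : ∀ b : E, ‖b‖ = 1 → ∃ f : C₀(Y, ℝ), ‖f‖ = 1 ∧ T f = b)
    (hiso : ∀ f g : C₀(Y, ℝ), ‖f‖ = 1 → ‖g‖ = 1 → ‖T f - T g‖ = ‖f - g‖) :
    ∃ U : C₀(Y, ℝ) ≃ₗᵢ[ℝ] E, ∀ f : C₀(Y, ℝ), ‖f‖ = 1 → U f = T f := by
  classical
  by_cases hsp : ∃ f : C₀(Y, ℝ), ‖f‖ = 1
  swap
  · -- degenerate case : both spaces are trivial
    have hX : ∀ f : C₀(Y, ℝ), f = 0 := by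
      intro f
      by_contra hf
      exact hsp ⟨‖f‖⁻¹ • f, norm_smul_inv_norm hf⟩
    have hE : ∀ e : E, e = 0 := by
      intro e
      by_contra he
      obtain ⟨f, hf, _⟩ := hsurj (‖e‖⁻¹ • e) (norm_smul_inv_norm he)
      exact hsp ⟨f, hf⟩
    let eqv0 : C₀(Y, ℝ) ≃ₗ[ℝ] E :=
      { toFun := fun _ => 0
        map_add' := by intros; simp
        map_smul' := by intros; simp
        invFun := fun _ => 0
        left_inv := fun x => (hX x).symm
        right_inv := fun e => (hE e).symm }
    refine ⟨{ toLinearEquiv := eqv0, norm_map' := fun x => by rw [hX x]; simp }, ?_⟩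
    intro f hf
    exact absurd ⟨f, hf⟩ hsp
  · have hanti := Stmt13.anti T hmap hsurj hiso
    -- the supporting functionals
    have hfun : ∀ y : Y, ∃ φ : E →L[ℝ] ℝ, (∀ e, |φ e| ≤ ‖e‖) ∧
        ∀ f : C₀(Y, ℝ), ‖f‖ = 1 → φ (T f) = f y := by
      intro y
      obtain ⟨φ, hφb, hφl⟩ := Stmt13.exists_functional T hmap hsurj hiso hanti y
      obtain ⟨χ, hχb, hχl⟩ := Stmt13.exists_functional (fun f => T (-f))
        (fun f hf => hmap _ (by rw [norm_neg]; exact hf))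
        (fun b hb => by
          obtain ⟨f, hf, hTf⟩ := hsurj b hb
          exact ⟨-f, by rw [norm_neg]; exact hf, by simpa using hTf⟩)
        (fun f g hf hg => by
          have h := hiso (-f) (-g) (by rw [norm_neg]; exact hf) (by rw [norm_neg]; exact hg)
          rw [h, show (-f) - (-g) = -(f - g) by abel, norm_neg])
        (fun f hf => by
          simp only [neg_neg]
          rw [hanti f hf, neg_neg]) y
      have hχl' : ∀ g : C₀(Y, ℝ), ‖g‖ = 1 → -(g y) ≤ χ (T g) := by
        intro g hg
        have h := hχl (-g) (by rw [norm_neg]; exact hg)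
        rw [neg_neg] at h
        have he : (-g) y = -(g y) := by
          rw [ZeroAtInftyContinuousMap.coe_neg]
          rfl
        rw [he] at h
        exact h
      have hzero : ∀ e : E, ‖e‖ = 1 → φ e + χ e = 0 := by
        intro e he
        obtain ⟨f, hf, hTf⟩ := hsurj e he
        have h1 : 0 ≤ φ e + χ e := by
          rw [← hTf]
          linarith [hφl f hf, hχl' f hf]
        have hne : ‖-e‖ = 1 := by rw [norm_neg]; exact he
        obtain ⟨f', hf', hTf'⟩ := hsurj (-e) hne
        have h2 : 0 ≤ φ (-e) + χ (-e) := by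
          rw [← hTf']
          linarith [hφl f' hf', hχl' f' hf']
        rw [map_neg, map_neg] at h2
        linarith
      refine ⟨φ, hφb, ?_⟩
      intro f hf
      have hTf1 : ‖T f‖ = 1 := hmap f hf
      have h0 := hzero (T f) hTf1
      have h1 := hφl f hf
      have h2 := hχl' f hf
      linarith
    choose φ hφb hφl using hfun
    -- the inverse linear isometry
    have hrep : ∀ e : E, ∃ F : C₀(Y, ℝ), (∀ y, F y = φ y e) ∧ ‖F‖ = ‖e‖ := by
      intro e
      rcases eq_or_ne e 0 with rfl | he
      · exact ⟨0, by simp, by simp⟩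
      · have hne : 0 < ‖e‖ := norm_pos_iff.mpr he
        have hu : ‖‖e‖⁻¹ • e‖ = 1 := by
          rw [norm_smul, Real.norm_eq_abs, abs_of_pos (inv_pos.mpr hne),
            inv_mul_cancel₀ hne.ne']
        obtain ⟨f, hf, hTf⟩ := hsurj _ hu
        refine ⟨‖e‖ • f, ?_, ?_⟩
        · intro y
          have h1 : φ y (T f) = f y := hφl y f hf
          rw [hTf, map_smul, smul_eq_mul] at h1
          rw [Stmt13.smul_apply'', ← h1]
          field_simp
        · rw [Stmt13.norm_smul_c0, hf, abs_of_pos hne, mul_one]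
    choose Φ hΦa hΦn using hrep
    have hext : ∀ (F G : C₀(Y, ℝ)), (∀ y, F y = G y) → F = G := fun F G h =>
      DFunLike.ext _ _ h
    have hadd : ∀ e₁ e₂, Φ (e₁ + e₂) = Φ e₁ + Φ e₂ := by
      intro e₁ e₂
      apply hext
      intro y
      rw [hΦa, map_add, Stmt13.add_apply'', hΦa, hΦa]
    have hsmul : ∀ (c : ℝ) (e : E), Φ (c • e) = c • Φ e := by
      intro c e
      apply hext
      intro y
      rw [hΦa, map_smul, smul_eq_mul, Stmt13.smul_apply'', hΦa]
    set L : E →ₗ[ℝ] C₀(Y, ℝ) :=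
      { toFun := Φ
        map_add' := hadd
        map_smul' := hsmul } with hL
    have hLapp : ∀ e, L e = Φ e := fun _ => rfl
    have hLnorm : ∀ e, ‖L e‖ = ‖e‖ := fun e => by rw [hLapp]; exact hΦn e
    have hLinj : Function.Injective L := by
      intro a b hab
      have h1 : ‖L (a - b)‖ = ‖a - b‖ := hLnorm _
      rw [map_sub, hab, sub_self, norm_zero] at h1
      have := norm_eq_zero.mp h1.symm
      exact sub_eq_zero.mp this
    have hLsurj : Function.Surjective L := by
      intro x
      rcases eq_or_ne x 0 with rfl | hx
      · exact ⟨0, map_zero L⟩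
      · have hxn : 0 < ‖x‖ := norm_pos_iff.mpr hx
        have hu : ‖‖x‖⁻¹ • x‖ = 1 := norm_smul_inv_norm hx
        refine ⟨‖x‖ • T (‖x‖⁻¹ • x), ?_⟩
        rw [map_smul]
        apply hext
        intro y
        rw [Stmt13.smul_apply'', hLapp, hΦa, hφl y _ hu, Stmt13.smul_apply'']
        field_simp
    set eqv : E ≃ₗ[ℝ] C₀(Y, ℝ) := LinearEquiv.ofBijective L ⟨hLinj, hLsurj⟩ with heqv
    have heqvapp : ∀ e, eqv e = Φ e := fun _ => rfl
    set Ψ : E ≃ₗᵢ[ℝ] C₀(Y, ℝ) := ⟨eqv, fun e => hLnorm e⟩ with hΨ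
    have hΨapp : ∀ e, Ψ e = Φ e := fun _ => rfl
    refine ⟨Ψ.symm, ?_⟩
    intro f hf
    have hkey : Ψ (T f) = f := by
      rw [hΨapp]
      apply hext
      intro y
      rw [hΦa, hφl y f hf]
    have := congrArg Ψ.symm hkey
    rw [LinearIsometryEquiv.symm_apply_apply] at this
    exact this.symm
end

section
/- Let B₁, B₂ be real Banach spaces, T : S(B₁) → S(B₂) a surjective isometry, and P₁ a set of representatives for S(B₁). Let φ and τ be defined by T(F_{p,λ}) = F_{φ(p), τ(p,λ)} for (p,λ) ∈ P₁ × {±1} (φ independent of λ since T(−F) = −T(F)). Then for every p ∈ P₁ and every α ∈ [−1,1], T(M_{p,α}) = M_{φ(p), α·τ(p,1)}. -/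
/-- A maximal convex subset of the unit sphere of `B`. -/
def IsMaximalConvexSubsetR {B : Type*} [NormedAddCommGroup B] [Module ℝ B] (F : Set B) : Prop :=
  Convex ℝ F ∧ F ⊆ {a : B | ‖a‖ = 1} ∧
    ∀ G : Set B, Convex ℝ G → G ⊆ {a : B | ‖a‖ = 1} → F ⊆ G → G = F

/-- The face `F_{p,λ} = {a ∈ S(B) : p(a) = λ}` (real case). -/
def faceSetR {B : Type*} [NormedAddCommGroup B] [NormedSpace ℝ B]
    (p : StrongDual ℝ B) (lam : ℝ) : Set B :=
  {a : B | ‖a‖ = 1 ∧ p a = lam}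

/-- `P` is a set of representatives for the maximal convex subsets of the sphere of a
real Banach space `B`: every maximal convex subset is `F_{p,λ}` for a unique
`(p,λ) ∈ P × {±1}`, and every such `F_{p,λ}` is maximal convex. -/
def IsRepresentativeSetR {B : Type*} [NormedAddCommGroup B] [NormedSpace ℝ B]
    (P : Set (StrongDual ℝ B)) : Prop :=
  (∀ F : Set B, IsMaximalConvexSubsetR F →
    ∃ p ∈ P, ∃ lam : ℝ, |lam| = 1 ∧ F = faceSetR p lam) ∧
  (∀ p ∈ P, ∀ lam : ℝ, |lam| = 1 → IsMaximalConvexSubsetR (faceSetR p lam)) ∧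
  (∀ p ∈ P, ∀ p' ∈ P, ∀ lam lam' : ℝ, |lam| = 1 → |lam'| = 1 →
    faceSetR p lam = faceSetR p' lam' → p = p' ∧ lam = lam')

/-- The set `M_{p,α}` for a real Banach space (with `α/|α|` read as `1` for `α = 0`);
the extended distance `infEdist` is used, so the distance to `∅` is `∞`. -/
def MsetR {B : Type*} [NormedAddCommGroup B] [NormedSpace ℝ B]
    (p : StrongDual ℝ B) (α : ℝ) : Set B :=
  {a : B | ‖a‖ = 1 ∧
    EMetric.infEdist a (faceSetR p (if α = 0 then 1 else α / |α|)) ≤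
      ENNReal.ofReal (1 - |α|) ∧
    EMetric.infEdist a (faceSetR p (-(if α = 0 then 1 else α / |α|))) ≤
      ENNReal.ofReal (1 + |α|)}

/-- For real Banach spaces `B₁, B₂`, a surjective isometry `T` of
their unit spheres, a set of representatives `P₁` (resp. `P₂`), and the induced
maps `φ, τ` with `T(F_{p,λ}) = F_{φ(p), τ(p,λ)}` and `τ(p,-1) = -τ(p,1)`, one has
`T(M_{p,α}) = M_{φ(p), α·τ(p,1)}` for every `p ∈ P₁` and `α ∈ [-1,1]`. -/
theorem stmt18 {B₁ B₂ : Type*} [NormedAddCommGroup B₁] [NormedSpace ℝ B₁] [CompleteSpace B₁]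
    [NormedAddCommGroup B₂] [NormedSpace ℝ B₂] [CompleteSpace B₂]
    (T : B₁ → B₂)
    (hmap : ∀ a : B₁, ‖a‖ = 1 → ‖T a‖ = 1)
    (hsurj : ∀ b : B₂, ‖b‖ = 1 → ∃ a : B₁, ‖a‖ = 1 ∧ T a = b)
    (hiso : ∀ a b : B₁, ‖a‖ = 1 → ‖b‖ = 1 → ‖T a - T b‖ = ‖a - b‖)
    (P₁ : Set (StrongDual ℝ B₁)) (P₂ : Set (StrongDual ℝ B₂))
    (hP₁ : IsRepresentativeSetR P₁) (hP₂ : IsRepresentativeSetR P₂)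
    (φ : StrongDual ℝ B₁ → StrongDual ℝ B₂)
    (τ : StrongDual ℝ B₁ → ℝ → ℝ)
    (hφτ : ∀ p ∈ P₁, ∀ lam : ℝ, |lam| = 1 →
      φ p ∈ P₂ ∧ |τ p lam| = 1 ∧ T '' faceSetR p lam = faceSetR (φ p) (τ p lam))
    (hτneg : ∀ p ∈ P₁, τ p (-1) = -(τ p 1)) :
    ∀ p ∈ P₁, ∀ α : ℝ, α ∈ Set.Icc (-1 : ℝ) 1 →
      T '' MsetR p α = MsetR (φ p) (α * τ p 1) := by
  intro p hp α hα
  have htneg := hτneg p hp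
  have ht1 : |τ p 1| = 1 := (hφτ p hp 1 (by norm_num)).2.1
  have hτ : ∀ s : ℝ, |s| = 1 → τ p s = s * τ p 1 := by
    intro s hs
    rcases (abs_eq zero_le_one).mp hs with rfl | rfl
    · ring
    · rw [htneg]; ring
  have hF : ∀ s : ℝ, |s| = 1 → T '' faceSetR p s = faceSetR (φ p) (s * τ p 1) := by
    intro s hs
    have h := (hφτ p hp s hs).2.2
    rwa [hτ s hs] at h
  have key : ∀ a : B₁, ‖a‖ = 1 → ∀ s : ℝ, |s| = 1 →
      EMetric.infEdist (T a) (faceSetR (φ p) (s * τ p 1)) =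
      EMetric.infEdist a (faceSetR p s) := by
    intro a ha s hs
    rw [← hF s hs]
    simp only [EMetric.infEdist, Metric.infEDist, iInf_image]
    refine iInf_congr fun y => iInf_congr fun hy => ?_
    rw [edist_dist, edist_dist, dist_eq_norm, dist_eq_norm, hiso a y ha hy.1]
  have habs : |α * τ p 1| = |α| := by rw [abs_mul, ht1, mul_one]
  have hmem : ∀ a : B₁, ‖a‖ = 1 → (a ∈ MsetR p α ↔ T a ∈ MsetR (φ p) (α * τ p 1)) := by
    intro a ha
    have hTa := hmap a ha
    by_cases h0 : α = 0
    · subst h0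
      rcases (abs_eq zero_le_one).mp ht1 with ht | ht
      · have k1 : EMetric.infEdist (T a) (faceSetR (φ p) 1) =
            EMetric.infEdist a (faceSetR p 1) := by
          have := key a ha 1 (by norm_num)
          rwa [ht, one_mul] at this
        have k2 : EMetric.infEdist (T a) (faceSetR (φ p) (-1)) =
            EMetric.infEdist a (faceSetR p (-1)) := by
          have := key a ha (-1) (by norm_num)
          rw [ht] at this
          rwa [show (-1 : ℝ) * 1 = -1 from by norm_num] at this
        simp only [MsetR, Set.mem_setOf_eq, ha, hTa, true_and, zero_mul,
          abs_zero, sub_zero, add_zero]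
        simp only [if_true]
        rw [k1, k2]
      · have k1 : EMetric.infEdist (T a) (faceSetR (φ p) 1) =
            EMetric.infEdist a (faceSetR p (-1)) := by
          have := key a ha (-1) (by norm_num)
          rw [ht] at this
          rwa [show (-1 : ℝ) * (-1) = 1 from by norm_num] at this
        have k2 : EMetric.infEdist (T a) (faceSetR (φ p) (-1)) =
            EMetric.infEdist a (faceSetR p 1) := by
          have := key a ha 1 (by norm_num)
          rw [ht] at this
          rwa [show (1 : ℝ) * (-1) = -1 from by norm_num] at this
        simp only [MsetR, Set.mem_setOf_eq, ha, hTa, true_and, zero_mul,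
          abs_zero, sub_zero, add_zero]
        simp only [if_true]
        rw [k1, k2]
        exact ⟨fun h => ⟨h.2, h.1⟩, fun h => ⟨h.2, h.1⟩⟩
    · have hν : abs (α / |α|) = 1 := by
        rw [abs_div, abs_abs, div_self (abs_ne_zero.mpr h0)]
      have hν' : abs (-(α / |α|)) = 1 := by rwa [abs_neg]
      have h0' : α * τ p 1 ≠ 0 := by
        intro h
        rw [← abs_eq_zero, habs, abs_eq_zero] at h
        exact h0 h
      have k1 : EMetric.infEdist (T a) (faceSetR (φ p) (α * τ p 1 / |α|)) =
          EMetric.infEdist a (faceSetR p (α / |α|)) := by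
        have := key a ha (α / |α|) hν
        rwa [show α / |α| * τ p 1 = α * τ p 1 / |α| from by ring] at this
      have k2 : EMetric.infEdist (T a) (faceSetR (φ p) (-(α * τ p 1 / |α|))) =
          EMetric.infEdist a (faceSetR p (-(α / |α|))) := by
        have := key a ha (-(α / |α|)) hν'
        rwa [show -(α / |α|) * τ p 1 = -(α * τ p 1 / |α|) from by ring] at this
      simp only [MsetR, Set.mem_setOf_eq, ha, hTa, true_and, if_neg h0, if_neg h0',
        habs, k1, k2]
  ext b
  constructor
  · rintro ⟨a, haM, rfl⟩
    exact (hmem a haM.1).mp haM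
  · intro hb
    obtain ⟨a, ha, rfl⟩ := hsurj b hb.1
    exact ⟨a, (hmem a ha).mpr hb, rfl⟩
end
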